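/- arXiv:1803.00862 — 6 statements merged into one kernel-verified Lean document; each statement's English description precedes it below -/
import Mathlib

section
/- A vector z ∈ ℝ^(2N-1) (identified with the complex sequence z_ℂ) belongs to the dual cone C* of the cone C of positive-semidefinite Hermitian Toeplitz matrices if and only if its trigonometric polynomial Z(ω) = (z_ℂ)_0 + 2 Σ_{k=1}^{N-1} Re((z_ℂ)_k e^{-jωk}) is nonnegative for all ω ∈ [0, 2π). -/
open Complex Matrix ComplexOrder Real

noncomputable section


/-- Hermitian Toeplitz matrix with first row `(2u₀, u₁ + j u_N, …, u_{N-1} + j u_{2N-2})`. -/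
def Tmat (N : ℕ) (u : Fin (2*N-1) → ℝ) : Matrix (Fin N) (Fin N) ℂ :=
  fun n m =>
    let g : ℕ → ℝ := fun k => if h : k < 2*N-1 then u ⟨k, h⟩ else 0
    let r : ℕ → ℂ := fun k =>
      if k = 0 then ((2 * g 0 : ℝ) : ℂ) else ((g k : ℝ) : ℂ) + Complex.I * ((g (N-1+k) : ℝ) : ℂ)
    if (n : ℕ) ≤ (m : ℕ) then r ((m : ℕ) - (n : ℕ)) else star (r ((n : ℕ) - (m : ℕ)))

/-- Identification of `z ∈ ℝ^(2N-1)` with the complex sequence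
`z_ℂ = (z₀, z₁ + j z_N, …, z_{N-1} + j z_{2N-2})`. -/
def toC (N : ℕ) (z : Fin (2*N-1) → ℝ) : ℕ → ℂ := fun k =>
  let g : ℕ → ℝ := fun k => if h : k < 2*N-1 then z ⟨k, h⟩ else 0
  if k = 0 then ((g 0 : ℝ) : ℂ) else ((g k : ℝ) : ℂ) + Complex.I * ((g (N-1+k) : ℝ) : ℂ)

/-- The trigonometric polynomial `Z(ω) = (z_ℂ)₀ + 2 Σ_{k=1}^{N-1} Re((z_ℂ)_k e^{-jωk})`. -/
def trigPoly (N : ℕ) (z : Fin (2*N-1) → ℝ) (ω : ℝ) : ℝ :=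
  (toC N z 0).re +
    2 * ∑ k ∈ Finset.Ico 1 N, (toC N z k * Complex.exp (-Complex.I * ω * k)).re


section FRsec
open Polynomial Finset ComplexConjugate

namespace FR


/-- two-sided trigonometric polynomial -/
def Qf (c : ℤ → ℂ) (n : ℕ) (θ : ℝ) : ℂ :=
  ∑ k ∈ Finset.Icc (-(n:ℤ)) (n:ℤ), c k * Complex.exp ((k:ℂ) * (θ:ℂ) * Complex.I)

/-- associated polynomial of degree ≤ 2n -/
def Pc (c : ℤ → ℂ) (n : ℕ) : Polynomial ℂ :=
  ∑ j ∈ Finset.range (2*n+1), Polynomial.C (c ((j:ℤ) - n)) * Polynomial.X ^ j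

def conjReflect (d : ℕ) (f : Polynomial ℂ) : Polynomial ℂ :=
  ∑ j ∈ Finset.range (d+1), Polynomial.C (conj (f.coeff (d - j))) * Polynomial.X ^ j

lemma coeff_Pc (c : ℤ → ℂ) (n j : ℕ) :
    (Pc c n).coeff j = if j ≤ 2*n then c ((j:ℤ) - n) else 0 := by
  simp only [Pc, Polynomial.finset_sum_coeff, Polynomial.coeff_C_mul, Polynomial.coeff_X_pow,
    mul_ite, mul_one, mul_zero]
  rw [Finset.sum_ite_eq (Finset.range (2*n+1)) j (fun i => c ((i:ℤ) - n))]
  simp only [Finset.mem_range]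
  by_cases h : j ≤ 2*n
  · rw [if_pos (by omega), if_pos h]
  · rw [if_neg (by omega), if_neg h]

lemma natDegree_Pc (c : ℤ → ℂ) (n : ℕ) : (Pc c n).natDegree ≤ 2*n := by
  rw [Polynomial.natDegree_le_iff_coeff_eq_zero]
  intro N hN
  rw [coeff_Pc, if_neg (by omega)]

lemma coeff_conjReflect (d : ℕ) (f : Polynomial ℂ) (j : ℕ) :
    (conjReflect d f).coeff j = if j ≤ d then conj (f.coeff (d - j)) else 0 := by
  simp only [conjReflect, Polynomial.finset_sum_coeff, Polynomial.coeff_C_mul,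
    Polynomial.coeff_X_pow, mul_ite, mul_one, mul_zero]
  rw [Finset.sum_ite_eq (Finset.range (d+1)) j (fun i => conj (f.coeff (d - i)))]
  simp only [Finset.mem_range]
  by_cases h : j ≤ d
  · rw [if_pos (by omega), if_pos h]
  · rw [if_neg (by omega), if_neg h]

lemma natDegree_conjReflect (d : ℕ) (f : Polynomial ℂ) : (conjReflect d f).natDegree ≤ d := by
  rw [Polynomial.natDegree_le_iff_coeff_eq_zero]
  intro N hN
  rw [coeff_conjReflect, if_neg (by omega)]

lemma Qf_eq_eval (c : ℤ → ℂ) (n : ℕ) (θ : ℝ) :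
    Qf c n θ = Complex.exp (-(n:ℂ) * (θ:ℂ) * Complex.I)
      * (Pc c n).eval (Complex.exp ((θ:ℂ) * Complex.I)) := by
  rw [Pc, Polynomial.eval_finset_sum, Finset.mul_sum, Qf]
  refine Finset.sum_nbij' (i := fun (k:ℤ) => (k + n).toNat) (j := fun (j:ℕ) => (j:ℤ) - n)
    ?_ ?_ ?_ ?_ ?_
  · intro k hk
    simp only [Finset.mem_Icc] at hk
    simp only [Finset.mem_range]
    omega
  · intro j hj
    simp only [Finset.mem_range] at hj
    simp only [Finset.mem_Icc]
    omega
  · intro k hk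
    simp only [Finset.mem_Icc] at hk
    show ((k + (n:ℤ)).toNat : ℤ) - n = k
    omega
  · intro j hj
    simp only [Finset.mem_range] at hj
    show ((j:ℤ) - n + n).toNat = j
    omega
  · intro k hk
    simp only [Finset.mem_Icc] at hk
    have h1 : ((k + (n:ℤ)).toNat : ℤ) = k + n := by omega
    have h1' : k + (n:ℤ) - n = k := by ring
    beta_reduce
    rw [Polynomial.eval_mul, Polynomial.eval_C, Polynomial.eval_pow, Polynomial.eval_X, h1]
    rw [← Complex.exp_nat_mul]
    have h2 : ((k + (n:ℤ)).toNat : ℂ) = (k:ℂ) + n := by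
      exact_mod_cast congrArg (fun (x:ℤ) => (x:ℂ)) h1
    have h3 : Complex.exp (-(n:ℂ) * (θ:ℂ) * Complex.I)
        * Complex.exp (((k + (n:ℤ)).toNat : ℂ) * ((θ:ℂ) * Complex.I))
        = Complex.exp ((k:ℂ) * (θ:ℂ) * Complex.I) := by
      rw [← Complex.exp_add]
      congr 1
      rw [h2]
      ring
    rw [h1', ← h3]
    ring

lemma eval_conjReflect (d : ℕ) (f : Polynomial ℂ) (hf : f.natDegree ≤ d) {w : ℂ} (hw : w ≠ 0) :
    (conjReflect d f).eval w = w^d * conj (f.eval ((conj w)⁻¹)) := by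
  rw [conjReflect, Polynomial.eval_finset_sum]
  simp only [Polynomial.eval_mul, Polynomial.eval_C, Polynomial.eval_pow, Polynomial.eval_X]
  rw [← Finset.sum_range_reflect (fun j => conj (f.coeff (d - j)) * w ^ j) (d+1)]
  rw [Polynomial.eval_eq_sum_range' (Nat.lt_succ_of_le hf), map_sum, Finset.mul_sum]
  refine Finset.sum_congr rfl ?_
  intro i hi
  simp only [Finset.mem_range, Nat.lt_succ_iff] at hi
  have h1 : d + 1 - 1 - i = d - i := by omega
  have h2 : d - (d - i) = i := by omega
  rw [h1, h2]
  rw [_root_.map_mul, map_pow]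
  have h3 : conj ((conj w)⁻¹) = w⁻¹ := by
    rw [map_inv₀, Complex.conj_conj]
  rw [h3]
  have h5 : w ^ d = w ^ (d-i) * w ^ i := by
    rw [← pow_add]; congr 1; omega
  have h4 : w ^ d * (w⁻¹) ^ i = w ^ (d - i) := by
    rw [h5, inv_pow, mul_assoc, mul_inv_cancel₀ (pow_ne_zero _ hw), mul_one]
  rw [← h4]
  ring

lemma conjReflect_mul (d₁ d₂ : ℕ) (f g : Polynomial ℂ)
    (hf : f.natDegree ≤ d₁) (hg : g.natDegree ≤ d₂) :
    conjReflect (d₁+d₂) (f*g) = conjReflect d₁ f * conjReflect d₂ g := by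
  apply Polynomial.eq_of_infinite_eval_eq
  apply Set.Infinite.mono (s := {(0:ℂ)}ᶜ)
  · intro w hw
    have hw' : w ≠ 0 := hw
    simp only [Set.mem_setOf_eq, Polynomial.eval_mul]
    rw [eval_conjReflect _ _ (le_trans (Polynomial.natDegree_mul_le) (add_le_add hf hg)) hw',
      eval_conjReflect _ _ hf hw', eval_conjReflect _ _ hg hw', Polynomial.eval_mul, _root_.map_mul,
      pow_add]
    ring
  · exact (Set.finite_singleton 0).infinite_compl

lemma conj_Qf (c : ℤ → ℂ) (n : ℕ) (hh : ∀ k, c (-k) = conj (c k)) (θ : ℝ) :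
    conj (Qf c n θ) = Qf c n θ := by
  rw [Qf, map_sum]
  refine Finset.sum_nbij' (i := fun (k:ℤ) => -k) (j := fun (k:ℤ) => -k) ?_ ?_ ?_ ?_ ?_
  · intro k hk; simp only [Finset.mem_Icc] at hk ⊢; omega
  · intro k hk; simp only [Finset.mem_Icc] at hk ⊢; omega
  · intro k _; ring
  · intro k _; ring
  · intro k _
    rw [_root_.map_mul, ← Complex.exp_conj]
    have : conj ((k:ℂ) * (θ:ℂ) * Complex.I) = ((-k : ℤ):ℂ) * (θ:ℂ) * Complex.I := by
      rw [_root_.map_mul, _root_.map_mul, Complex.conj_I, map_intCast, Complex.conj_ofReal]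
      push_cast
      ring
    rw [this, ← hh k]

lemma sumIccSym (m : ℕ) (f : ℤ → ℂ) :
    ∑ k ∈ Finset.Icc (-(m:ℤ)) (m:ℤ), f k
      = f 0 + ∑ k ∈ Finset.Icc (1:ℤ) (m:ℤ), (f k + f (-k)) := by
  induction m with
  | zero => simp
  | succ m ih =>
    have h1 : Finset.Icc (-(m+1:ℤ)) (m+1:ℤ)
        = insert (-(m+1:ℤ)) (insert ((m+1:ℤ)) (Finset.Icc (-(m:ℤ)) (m:ℤ))) := by
      ext x; simp only [Finset.mem_Icc, Finset.mem_insert]; omega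
    have h2 : Finset.Icc (1:ℤ) (m+1:ℤ) = insert ((m+1:ℤ)) (Finset.Icc (1:ℤ) (m:ℤ)) := by
      ext x; simp only [Finset.mem_Icc, Finset.mem_insert]; omega
    have hm1 : (-(m+1:ℤ)) ∉ insert ((m+1:ℤ)) (Finset.Icc (-(m:ℤ)) (m:ℤ)) := by
      simp only [Finset.mem_insert, Finset.mem_Icc]; omega
    have hm2 : ((m+1:ℤ)) ∉ Finset.Icc (-(m:ℤ)) (m:ℤ) := by
      simp only [Finset.mem_Icc]; omega
    have hm3 : ((m+1:ℤ)) ∉ Finset.Icc (1:ℤ) (m:ℤ) := by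
      simp only [Finset.mem_Icc]; omega
    push_cast
    rw [h1, Finset.sum_insert hm1, Finset.sum_insert hm2, h2, Finset.sum_insert hm3, ih]
    ring



lemma key_exp_diff' (a b : ℝ) :
    Complex.exp (((a+b : ℝ):ℂ) * Complex.I) - Complex.exp (((a-b : ℝ):ℂ) * Complex.I)
      = ((2 * Real.sin b : ℝ) : ℂ) * (Complex.I * Complex.exp ((a:ℂ) * Complex.I)) := by
  rw [Complex.exp_mul_I, Complex.exp_mul_I, Complex.exp_mul_I]
  apply Complex.ext <;>
    simp only [Complex.sub_re, Complex.add_re, Complex.mul_re, Complex.mul_im, Complex.sub_im,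
      Complex.add_im, Complex.I_re, Complex.I_im, Complex.ofReal_re, Complex.ofReal_im,
      Complex.cos_ofReal_re, Complex.sin_ofReal_re, Complex.cos_ofReal_im,
      Complex.sin_ofReal_im, Real.cos_add, Real.cos_sub, Real.sin_add, Real.sin_sub] <;>
    ring

lemma key_exp_diff (θ θ₀ : ℝ) :
    Complex.exp ((θ:ℂ) * Complex.I) - Complex.exp ((θ₀:ℂ) * Complex.I)
      = ((2 * Real.sin ((θ - θ₀)/2) : ℝ) : ℂ)
        * (Complex.I * Complex.exp ((((θ + θ₀)/2 : ℝ):ℂ) * Complex.I)) := by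
  have h := key_exp_diff' ((θ + θ₀)/2) ((θ - θ₀)/2)
  have e1 : (θ + θ₀)/2 + (θ - θ₀)/2 = θ := by ring
  have e2 : (θ + θ₀)/2 - (θ - θ₀)/2 = θ₀ := by ring
  rw [e1, e2] at h
  exact h

lemma cont_nonneg_right (f : ℝ → ℝ) (θ δ : ℝ) (hδ : 0 < δ) (hf : Continuous f)
    (h : ∀ t ∈ Set.Ioo θ (θ+δ), 0 ≤ f t) : 0 ≤ f θ := by
  have h1 : Filter.Tendsto f (nhdsWithin θ (Set.Ioi θ)) (nhds (f θ)) :=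
    hf.continuousAt.tendsto.mono_left nhdsWithin_le_nhds
  refine ge_of_tendsto h1 ?_
  filter_upwards [Ioo_mem_nhdsGT_of_mem (show θ ∈ Set.Ico θ (θ + δ) from Set.mem_Ico.2 ⟨le_refl θ, by linarith⟩)] with t ht
  exact h t ht

lemma cont_nonneg_left (f : ℝ → ℝ) (θ δ : ℝ) (hδ : 0 < δ) (hf : Continuous f)
    (h : ∀ t ∈ Set.Ioo (θ-δ) θ, 0 ≤ f t) : 0 ≤ f θ := by
  have h1 : Filter.Tendsto f (nhdsWithin θ (Set.Iio θ)) (nhds (f θ)) :=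
    hf.continuousAt.tendsto.mono_left nhdsWithin_le_nhds
  refine ge_of_tendsto h1 ?_
  filter_upwards [Ioo_mem_nhdsLT_of_mem (show θ ∈ Set.Ioc (θ - δ) θ from Set.mem_Ioc.2 ⟨by linarith, le_refl θ⟩)] with t ht
  exact h t ht

lemma even_rootMultiplicity (P : Polynomial ℂ) (n : ℕ) (θ₀ : ℝ)
    (hre : ∀ θ : ℝ, 0 ≤ (Complex.exp (-(n:ℂ) * (θ:ℂ) * Complex.I)
      * P.eval (Complex.exp ((θ:ℂ)*Complex.I))).re)
    (him : ∀ θ : ℝ, (Complex.exp (-(n:ℂ) * (θ:ℂ) * Complex.I)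
      * P.eval (Complex.exp ((θ:ℂ)*Complex.I))).im = 0) :
    Even (P.rootMultiplicity (Complex.exp ((θ₀:ℂ)*Complex.I))) := by
  by_cases hP : P = 0
  · simp [hP]
  set α := Complex.exp ((θ₀:ℂ)*Complex.I) with hα
  set m := P.rootMultiplicity α with hmdef
  by_contra hodd
  have hm : Odd m := Nat.not_even_iff_odd.1 hodd
  set W := P /ₘ (X - C α)^m with hWdef
  have hPW : (X - C α)^m * W = P := Polynomial.pow_mul_divByMonic_rootMultiplicity_eq P α
  have hW : W.eval α ≠ 0 := Polynomial.eval_divByMonic_pow_rootMultiplicity_ne_zero α hP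
  set G : ℝ → ℂ := fun θ => (Complex.I * Complex.exp ((((θ + θ₀)/2 : ℝ):ℂ) * Complex.I))^m
      * Complex.exp (-(n:ℂ)*(θ:ℂ)*Complex.I) * W.eval (Complex.exp ((θ:ℂ)*Complex.I)) with hGdef
  have hGcont : Continuous G := by
    apply Continuous.mul
    apply Continuous.mul
    · apply Continuous.pow
      apply Continuous.mul continuous_const
      exact Complex.continuous_exp.comp
        ((Complex.continuous_ofReal.comp (by continuity)).mul continuous_const)
    · exact Complex.continuous_exp.comp
        ((continuous_const.mul Complex.continuous_ofReal).mul continuous_const)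
    · exact (W.continuous).comp
        (Complex.continuous_exp.comp (Complex.continuous_ofReal.mul continuous_const))
  have hq : ∀ θ : ℝ, Complex.exp (-(n:ℂ)*(θ:ℂ)*Complex.I) * P.eval (Complex.exp ((θ:ℂ)*Complex.I))
      = (((2 * Real.sin ((θ - θ₀)/2))^m : ℝ):ℂ) * G θ := by
    intro θ
    rw [← hPW]
    rw [Polynomial.eval_mul, Polynomial.eval_pow, Polynomial.eval_sub, Polynomial.eval_X,
      Polynomial.eval_C, key_exp_diff θ θ₀]
    simp only [hGdef]
    rw [mul_pow]
    push_cast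
    ring
  have hG0 : G θ₀ ≠ 0 := by
    simp only [hGdef]
    exact mul_ne_zero (mul_ne_zero
      (pow_ne_zero _ (mul_ne_zero Complex.I_ne_zero (Complex.exp_ne_zero _)))
      (Complex.exp_ne_zero _)) hW
  have hπ : 0 < Real.pi := Real.pi_pos
  -- facts on the right interval
  have hright : ∀ t ∈ Set.Ioo θ₀ (θ₀ + Real.pi), 0 ≤ (G t).re ∧ (G t).im = 0 := by
    intro t ht
    obtain ⟨ht1, ht2⟩ := ht
    have hs : 0 < 2 * Real.sin ((t - θ₀)/2) := by
      have : 0 < Real.sin ((t - θ₀)/2) :=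
        Real.sin_pos_of_pos_of_lt_pi (by linarith) (by linarith)
      linarith
    have hsm : 0 < (2 * Real.sin ((t - θ₀)/2))^m := pow_pos hs m
    have h1 := hre t
    have h2 := him t
    rw [hq t] at h1 h2
    rw [Complex.re_ofReal_mul] at h1
    rw [Complex.im_ofReal_mul] at h2
    constructor
    · exact (mul_nonneg_iff_of_pos_left hsm).1 h1
    · exact (mul_eq_zero.1 h2).resolve_left (ne_of_gt hsm)
  have hleft : ∀ t ∈ Set.Ioo (θ₀ - Real.pi) θ₀, (G t).re ≤ 0 ∧ (G t).im = 0 := by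
    intro t ht
    obtain ⟨ht1, ht2⟩ := ht
    have hs : 2 * Real.sin ((t - θ₀)/2) < 0 := by
      have : Real.sin ((t - θ₀)/2) < 0 :=
        Real.sin_neg_of_neg_of_neg_pi_lt (by linarith) (by linarith)
      linarith
    have hsm : (2 * Real.sin ((t - θ₀)/2))^m < 0 := hm.pow_neg hs
    have h1 := hre t
    have h2 := him t
    rw [hq t] at h1 h2
    rw [Complex.re_ofReal_mul] at h1
    rw [Complex.im_ofReal_mul] at h2
    constructor
    · nlinarith
    · exact (mul_eq_zero.1 h2).resolve_left (ne_of_lt hsm)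
  have hre0 : 0 ≤ (G θ₀).re :=
    cont_nonneg_right (fun t => (G t).re) θ₀ Real.pi hπ
      (by exact Complex.continuous_re.comp hGcont)
      (fun t ht => (hright t ht).1)
  have hre0' : 0 ≤ -(G θ₀).re :=
    cont_nonneg_left (fun t => -(G t).re) θ₀ Real.pi hπ
      (by exact (Complex.continuous_re.comp hGcont).neg)
      (fun t ht => by simpa using (hleft t ht).1)
  have him0 : 0 ≤ (G θ₀).im :=
    cont_nonneg_right (fun t => (G t).im) θ₀ Real.pi hπ
      (by exact Complex.continuous_im.comp hGcont)
      (fun t ht => le_of_eq (hright t ht).2.symm)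
  have him0' : 0 ≤ -(G θ₀).im :=
    cont_nonneg_right (fun t => -(G t).im) θ₀ Real.pi hπ
      (by exact (Complex.continuous_im.comp hGcont).neg)
      (fun t ht => by simp [(hright t ht).2])
  apply hG0
  apply Complex.ext <;> simp <;> linarith


end FR

namespace FR
open Polynomial

lemma conjReflect_C_mul (d : ℕ) (μ : ℂ) (f : Polynomial ℂ) :
    conjReflect d (Polynomial.C μ * f) = Polynomial.C (conj μ) * conjReflect d f := by
  apply Polynomial.ext
  intro j
  rw [Polynomial.coeff_C_mul, coeff_conjReflect, coeff_conjReflect]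
  by_cases h : j ≤ d
  · rw [if_pos h, if_pos h, Polynomial.coeff_C_mul, _root_.map_mul]
  · rw [if_neg h, if_neg h, mul_zero]

lemma fr_main (n : ℕ) : ∀ (c : ℤ → ℂ), (∀ k, c (-k) = conj (c k)) →
    (∀ k : ℤ, (n:ℤ) < |k| → c k = 0) → (∀ θ : ℝ, 0 ≤ (Qf c n θ).re) →
    ∃ p : Polynomial ℂ, p.natDegree ≤ n ∧
      ∀ θ : ℝ, Qf c n θ =
        ((Complex.normSq (p.eval (Complex.exp ((θ:ℂ)*Complex.I))) : ℝ) : ℂ) := by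
  induction n with
  | zero =>
    intro c hherm hsupp hpos
    have h0 : ∀ θ : ℝ, Qf c 0 θ = c 0 := by
      intro θ
      rw [Qf]
      norm_num
    have hreal : ((c 0).re : ℂ) = c 0 := by
      have h := hherm 0
      rw [neg_zero] at h
      exact Complex.conj_eq_iff_re.1 h.symm
    have hge : 0 ≤ (c 0).re := by
      have := hpos 0
      rw [h0 0] at this
      exact this
    refine ⟨Polynomial.C ((Real.sqrt ((c 0).re) : ℝ) : ℂ), by simp, ?_⟩
    intro θ
    rw [h0 θ, Polynomial.eval_C]
    rw [Complex.normSq_ofReal, Real.mul_self_sqrt hge, hreal]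
  | succ n ih =>
    intro c hherm hsupp hpos
    by_cases hc : c ((n:ℤ)+1) = 0
    · -- top coefficient vanishes : reduce degree
      have hc' : c (-((n:ℤ)+1)) = 0 := by rw [hherm, hc, map_zero]
      have hQ : ∀ θ, Qf c (n+1) θ = Qf c n θ := by
        intro θ
        rw [Qf, Qf]
        refine (Finset.sum_subset (Finset.Icc_subset_Icc (by push_cast; omega)
          (by push_cast; omega)) ?_).symm
        · intro k hk1 hk2
          simp only [Finset.mem_Icc] at hk1 hk2
          push_cast at hk1 hk2
          have hor : k = (n:ℤ)+1 ∨ k = -((n:ℤ)+1) := by omega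
          have : c k = 0 := by
            rcases hor with h1 | h1
            · rw [h1]; exact hc
            · rw [h1]; exact hc'
          rw [this, zero_mul]
      have hsupp' : ∀ k : ℤ, (n:ℤ) < |k| → c k = 0 := by
        intro k hk
        by_cases h : ((n+1:ℕ):ℤ) < |k|
        · exact hsupp k h
        · push_cast at h
          rcases abs_choice k with e | e
          · rw [e] at hk h
            have h1 : k = (n:ℤ)+1 := by omega
            rw [h1]; exact hc
          · rw [e] at hk h
            have h1 : k = -((n:ℤ)+1) := by omega
            rw [h1]; exact hc'
      obtain ⟨p, hdeg, hp⟩ := ih c hherm hsupp'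
        (fun θ => by rw [← hQ θ]; exact hpos θ)
      exact ⟨p, le_trans hdeg (Nat.le_succ n), fun θ => by rw [hQ θ]; exact hp θ⟩
    · -- main case
      have hcN : c (((n+1:ℕ)):ℤ) ≠ 0 := by push_cast; exact hc
      set P := Pc c (n+1) with hPdef
      have hcoeff : ∀ j : ℕ, j ≤ 2*(n+1) → P.coeff j = c ((j:ℤ) - (n+1)) := by
        intro j hj
        rw [hPdef, coeff_Pc, if_pos hj]
        congr 1 <;> omega
      have htop : P.coeff (2*(n+1)) = c (((n+1:ℕ)):ℤ) := by
        rw [hcoeff _ le_rfl]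
        congr 1
        omega
      have hPne : P ≠ 0 := by
        intro h
        apply hcN
        rw [← htop, h, Polynomial.coeff_zero]
      have hdegP : P.natDegree = 2*(n+1) :=
        le_antisymm (natDegree_Pc c (n+1))
          (Polynomial.le_natDegree_of_ne_zero (by rw [htop]; exact hcN))
      have hCR : conjReflect (2*(n+1)) P = P := by
        apply Polynomial.ext
        intro j
        rw [coeff_conjReflect]
        by_cases hj : j ≤ 2*(n+1)
        · rw [if_pos hj, hcoeff j hj, hcoeff (2*(n+1) - j) (by omega), ← hherm]
          congr 1
          omega
        · rw [if_neg hj, eq_comm]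
          exact Polynomial.coeff_eq_zero_of_natDegree_lt (by omega)
      have hFEQ : ∀ w : ℂ, w ≠ 0 →
          P.eval w = w^(2*(n+1)) * conj (P.eval ((conj w)⁻¹)) := by
        intro w hw
        conv_lhs => rw [← hCR]
        exact eval_conjReflect _ _ (natDegree_Pc c (n+1)) hw
      have hdeg0 : 0 < P.degree :=
        Polynomial.natDegree_pos_iff_degree_pos.1 (by omega)
      obtain ⟨α, hαroot⟩ := Complex.exists_root hdeg0
      have heval : P.eval α = 0 := hαroot
      have hα0 : α ≠ 0 := by
        intro h
        have h1 : P.coeff 0 = c (-((n:ℤ)+1)) := by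
          rw [hcoeff 0 (by omega)]
          congr 1 <;> omega
        have h2 : P.coeff 0 = 0 := by
          rw [Polynomial.coeff_zero_eq_eval_zero]
          conv_lhs => rw [← h]
          exact heval
        apply hc
        have h3 := hherm ((n:ℤ)+1)
        rw [h1, h3] at h2
        simpa using h2
      have hcα : conj α ≠ 0 := by simpa using hα0
      -- positivity and realness in exponential form
      have hre' : ∀ θ : ℝ, 0 ≤ (Complex.exp (-((n+1:ℕ):ℂ) * (θ:ℂ) * Complex.I)
          * P.eval (Complex.exp ((θ:ℂ)*Complex.I))).re := by
        intro θ
        have := hpos θ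
        rwa [Qf_eq_eval] at this
      have him' : ∀ θ : ℝ, (Complex.exp (-((n+1:ℕ):ℂ) * (θ:ℂ) * Complex.I)
          * P.eval (Complex.exp ((θ:ℂ)*Complex.I))).im = 0 := by
        intro θ
        have h := Complex.conj_eq_iff_im.1 (conj_Qf c (n+1) hherm θ)
        rwa [Qf_eq_eval] at h
      -- the pair-divisor
      have hDdvd : (X - Polynomial.C α) * (X - Polynomial.C ((conj α)⁻¹)) ∣ P := by
        by_cases hσ : (conj α)⁻¹ = α
        · -- α on the unit circle : double root
          have habs : ((‖α‖ : ℝ) : ℂ) = 1 := by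
            have h1 : conj α * α = 1 := by
              nth_rewrite 2 [← hσ]
              exact mul_inv_cancel₀ hcα
            have h2 : (Complex.normSq α : ℂ) = 1 := by
              rw [← Complex.mul_conj, mul_comm]
              exact h1
            have h3 : Complex.normSq α = 1 := by exact_mod_cast h2
            rw [Complex.norm_def, h3, Real.sqrt_one, Complex.ofReal_one]
          have hexpα : Complex.exp ((α.arg:ℂ) * Complex.I) = α := by
            have := Complex.norm_mul_exp_arg_mul_I α
            rwa [habs, one_mul] at this
          have heven : Even (P.rootMultiplicity α) := by
            have := even_rootMultiplicity P (n+1) α.arg hre' him'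
            rwa [hexpα] at this
          have hpos' : 0 < P.rootMultiplicity α :=
            (Polynomial.rootMultiplicity_pos hPne).2 hαroot
          have h2le : 2 ≤ P.rootMultiplicity α := by
            obtain ⟨t, ht⟩ := heven
            omega
          have hdvd2 : (X - Polynomial.C α)^2 ∣ P :=
            dvd_trans (pow_dvd_pow _ h2le) (Polynomial.pow_rootMultiplicity_dvd P α)
          rw [hσ, ← sq]
          exact hdvd2
        · -- distinct pair of roots
          have hσ0 : (conj α)⁻¹ ≠ 0 := inv_ne_zero hcα
          have hroot2 : P.eval ((conj α)⁻¹) = 0 := by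
            rw [hFEQ _ hσ0]
            have h1 : (conj ((conj α)⁻¹))⁻¹ = α := by
              rw [map_inv₀, Complex.conj_conj, inv_inv]
            rw [h1, heval, map_zero, mul_zero]
          obtain ⟨H0, hH0⟩ := Polynomial.dvd_iff_isRoot.2 hαroot
          have hH0root : H0.eval ((conj α)⁻¹) = 0 := by
            have h2 := hroot2
            rw [hH0, Polynomial.eval_mul, Polynomial.eval_sub, Polynomial.eval_X,
              Polynomial.eval_C] at h2
            rcases mul_eq_zero.1 h2 with h3 | h3
            · exact absurd h3 (sub_ne_zero.2 hσ)
            · exact h3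
          obtain ⟨H, hH⟩ := Polynomial.dvd_iff_isRoot.2 hH0root
          exact ⟨H, by rw [hH0, hH, mul_assoc]⟩
      obtain ⟨H, hPDH⟩ := hDdvd
      have hHne : H ≠ 0 := by
        intro h
        rw [h, mul_zero] at hPDH
        exact hPne hPDH
      have hX1 : (X - Polynomial.C α) ≠ 0 := Polynomial.X_sub_C_ne_zero α
      have hX2 : (X - Polynomial.C ((conj α)⁻¹)) ≠ 0 := Polynomial.X_sub_C_ne_zero _
      have hDne : (X - Polynomial.C α) * (X - Polynomial.C ((conj α)⁻¹)) ≠ 0 :=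
        mul_ne_zero hX1 hX2
      have hdegD : ((X - Polynomial.C α) * (X - Polynomial.C ((conj α)⁻¹))).natDegree = 2 := by
        rw [Polynomial.natDegree_mul hX1 hX2, Polynomial.natDegree_X_sub_C,
          Polynomial.natDegree_X_sub_C]
      have hdegH : H.natDegree = 2*n := by
        have h1 := Polynomial.natDegree_mul hDne hHne
        rw [← hPDH, hdegP, hdegD] at h1
        omega
      have hCRD : conjReflect 2 ((X - Polynomial.C α) * (X - Polynomial.C ((conj α)⁻¹)))
          = Polynomial.C (conj α / α) * ((X - Polynomial.C α) * (X - Polynomial.C ((conj α)⁻¹))) := by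
        apply Polynomial.eq_of_infinite_eval_eq
        apply Set.Infinite.mono (s := {(0:ℂ)}ᶜ)
        · intro w hw
          have hw' : w ≠ 0 := hw
          simp only [Set.mem_setOf_eq]
          rw [eval_conjReflect 2 _ (le_of_eq hdegD) hw']
          simp only [Polynomial.eval_mul, Polynomial.eval_sub, Polynomial.eval_X,
            Polynomial.eval_C, _root_.map_mul, map_sub]
          rw [map_inv₀, map_inv₀, Complex.conj_conj, Complex.conj_conj]
          field_simp
          ring
        · exact (Set.finite_singleton 0).infinite_compl
      have hsplit : conjReflect (2*(n+1)) P
          = conjReflect 2 ((X - Polynomial.C α) * (X - Polynomial.C ((conj α)⁻¹)))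
            * conjReflect (2*n) H := by
        rw [hPDH]
        have h2 : 2*(n+1) = 2 + 2*n := by omega
        rw [h2]
        exact conjReflect_mul 2 (2*n) _ _ (le_of_eq hdegD) (le_of_eq hdegH)
      have hHsym : conjReflect (2*n) H = Polynomial.C (α / conj α) * H := by
        have h1 : (X - Polynomial.C α) * (X - Polynomial.C ((conj α)⁻¹)) * H
            = (X - Polynomial.C α) * (X - Polynomial.C ((conj α)⁻¹))
              * (Polynomial.C (conj α / α) * conjReflect (2*n) H) := by
          conv_lhs => rw [← hPDH, ← hCR, hsplit, hCRD]
          ring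
        have h2 := mul_left_cancel₀ hDne h1
        have h3 : α / conj α * (conj α / α) = 1 := by field_simp
        conv_rhs => rw [h2]
        rw [← mul_assoc, ← Polynomial.C_mul, h3, Polynomial.C_1, one_mul]
      set P₁ := Polynomial.C (-(conj α)⁻¹) * H with hP₁def
      have hCRP₁ : conjReflect (2*n) P₁ = P₁ := by
        rw [hP₁def, conjReflect_C_mul, hHsym, ← mul_assoc, ← Polynomial.C_mul]
        congr 2
        rw [map_neg, map_inv₀, Complex.conj_conj]
        field_simp
      have hP₁ne : P₁ ≠ 0 :=
        mul_ne_zero (by simp [hcα] : Polynomial.C (-(conj α)⁻¹) ≠ 0) hHne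
      have hdegP₁ : P₁.natDegree = 2*n := by
        rw [hP₁def, Polynomial.natDegree_C_mul (by simp [hcα]), hdegH]
      have hcoeffP₁ : ∀ j, 2*n < j → P₁.coeff j = 0 := fun j hj =>
        Polynomial.coeff_eq_zero_of_natDegree_lt (by omega)
      have hsymm : ∀ j, j ≤ 2*n → P₁.coeff j = conj (P₁.coeff (2*n - j)) := by
        intro j hj
        conv_lhs => rw [← hCRP₁]
        rw [coeff_conjReflect, if_pos hj]
      set c₁ : ℤ → ℂ := fun k => if |k| ≤ (n:ℤ) then P₁.coeff (k + n).toNat else 0 with hc₁def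
      have hherm₁ : ∀ k, c₁ (-k) = conj (c₁ k) := by
        intro k
        simp only [hc₁def]
        by_cases hk : |k| ≤ (n:ℤ)
        · rw [if_pos (by rw [abs_neg]; exact hk), if_pos hk]
          rw [abs_le] at hk
          rw [hsymm ((-k + (n:ℤ)).toNat) (by omega)]
          congr 2
          omega
        · rw [if_neg (by rw [abs_neg]; exact hk), if_neg hk, map_zero]
      have hsupp₁ : ∀ k : ℤ, (n:ℤ) < |k| → c₁ k = 0 := by
        intro k hk
        simp only [hc₁def]
        rw [if_neg (not_le.2 hk)]
      have hPc₁ : Pc c₁ n = P₁ := by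
        apply Polynomial.ext
        intro j
        rw [coeff_Pc]
        by_cases hj : j ≤ 2*n
        · rw [if_pos hj]
          simp only [hc₁def]
          rw [if_pos (by rw [abs_le]; omega)]
          congr 1
          omega
        · rw [if_neg hj, eq_comm]
          exact hcoeffP₁ j (by omega)
      have hQ₁ : ∀ θ : ℝ, Qf c₁ n θ = Complex.exp (-(n:ℂ) * (θ:ℂ) * Complex.I)
          * P₁.eval (Complex.exp ((θ:ℂ)*Complex.I)) := by
        intro θ
        rw [Qf_eq_eval, hPc₁]
      have hfact : ∀ θ : ℝ, Qf c (n+1) θ =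
          ((Complex.normSq (Complex.exp ((θ:ℂ)*Complex.I) - α) : ℝ):ℂ) * Qf c₁ n θ := by
        intro θ
        rw [Qf_eq_eval, hQ₁]
        set w := Complex.exp ((θ:ℂ)*Complex.I) with hwdef
        have hw0 : w ≠ 0 := Complex.exp_ne_zero _
        have hwc : conj w = w⁻¹ := by
          rw [hwdef, ← Complex.exp_conj, ← Complex.exp_neg]
          congr 1
          rw [_root_.map_mul, Complex.conj_ofReal, Complex.conj_I]
          ring
        rw [← hPdef, hPDH, hP₁def]
        rw [Polynomial.eval_mul, Polynomial.eval_mul, Polynomial.eval_mul,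
          Polynomial.eval_sub, Polynomial.eval_sub, Polynomial.eval_X,
          Polynomial.eval_C, Polynomial.eval_C, Polynomial.eval_C]
        have hns : ((Complex.normSq (w - α) : ℝ):ℂ) = (w - α) * conj (w - α) :=
          (Complex.mul_conj _).symm
        have hconj : conj (w - α) = w⁻¹ - conj α := by rw [map_sub, hwc]
        have hexp : Complex.exp (-((n+1:ℕ):ℂ) * (θ:ℂ) * Complex.I) * w
            = Complex.exp (-(n:ℂ) * (θ:ℂ) * Complex.I) := by
          rw [hwdef, ← Complex.exp_add]
          congr 1
          push_cast
          ring
        have hID : (w - α) * (w - (conj α)⁻¹)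
            = (-(conj α)⁻¹) * w * ((w - α) * (w⁻¹ - conj α)) := by
          field_simp
          ring
        rw [hns, hconj, hID, ← hexp]
        ring
      have hQ₁cont : Continuous fun θ : ℝ => Qf c₁ n θ := by
        unfold Qf
        apply continuous_finset_sum
        intro k _
        exact continuous_const.mul (Complex.continuous_exp.comp
          ((continuous_const.mul Complex.continuous_ofReal).mul continuous_const))
      have hkey : ∀ t : ℝ, Complex.exp ((t:ℂ)*Complex.I) ≠ α → 0 ≤ (Qf c₁ n t).re := by
        intro t hgood
        have h1 := hpos t
        rw [hfact t, Complex.re_ofReal_mul] at h1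
        have h2 : 0 < Complex.normSq (Complex.exp ((t:ℂ)*Complex.I) - α) :=
          Complex.normSq_pos.2 (sub_ne_zero.2 hgood)
        exact (mul_nonneg_iff_of_pos_left h2).1 h1
      have hpos₁ : ∀ θ : ℝ, 0 ≤ (Qf c₁ n θ).re := by
        intro θ
        by_cases hgood : Complex.exp ((θ:ℂ)*Complex.I) = α
        · apply cont_nonneg_right (fun t => (Qf c₁ n t).re) θ 1 one_pos
            (by exact Complex.continuous_re.comp hQ₁cont)
          intro t ht
          obtain ⟨ht1, ht2⟩ := ht
          apply hkey
          rw [← hgood]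
          intro h
          rw [Complex.exp_eq_exp_iff_exists_int] at h
          obtain ⟨k, hk⟩ := h
          have hk' : ((t:ℝ):ℂ) = ((θ:ℝ):ℂ) + (k:ℂ) * (2*((Real.pi:ℝ):ℂ)) := by
            have h2 : ((t:ℝ):ℂ) * Complex.I
                = (((θ:ℝ):ℂ) + (k:ℂ) * (2*((Real.pi:ℝ):ℂ))) * Complex.I := by
              rw [hk]; ring
            exact mul_right_cancel₀ Complex.I_ne_zero h2
          have ht' : t = θ + (k:ℝ) * (2*Real.pi) := by exact_mod_cast hk'
          have hπ3 := Real.pi_gt_three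
          rcases le_or_gt (k:ℤ) 0 with hk0 | hk0
          · have : (k:ℝ) ≤ 0 := by exact_mod_cast hk0
            nlinarith
          · have : (1:ℝ) ≤ (k:ℝ) := by exact_mod_cast hk0
            nlinarith
        · exact hkey θ hgood
      obtain ⟨p₁, hdegp₁, hp₁⟩ := ih c₁ hherm₁ hsupp₁ hpos₁
      refine ⟨(X - Polynomial.C α) * p₁, ?_, ?_⟩
      · refine le_trans (Polynomial.natDegree_mul_le) ?_
        rw [Polynomial.natDegree_X_sub_C]
        omega
      · intro θ
        rw [hfact θ, hp₁ θ, Polynomial.eval_mul, Polynomial.eval_sub, Polynomial.eval_X,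
          Polynomial.eval_C, Complex.normSq_mul]
        push_cast
        ring



def gv (N : ℕ) (z : Fin (2*N-1) → ℝ) : ℕ → ℝ := fun j => if h : j < 2*N-1 then z ⟨j, h⟩ else 0

lemma toC_eq (N : ℕ) (z : Fin (2*N-1) → ℝ) (k : ℕ) :
    toC N z k = if k = 0 then ((gv N z 0 : ℝ) : ℂ)
      else ((gv N z k : ℝ) : ℂ) + Complex.I * ((gv N z (N-1+k) : ℝ) : ℂ) := rfl

lemma Tmat_eq (N : ℕ) (u : Fin (2*N-1) → ℝ) (i j : Fin N) :
    Tmat N u i j = if (i : ℕ) ≤ (j : ℕ) then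
        (if (j:ℕ) - (i:ℕ) = 0 then ((2 * gv N u 0 : ℝ) : ℂ) else toC N u ((j:ℕ) - (i:ℕ)))
      else conj (if (i:ℕ) - (j:ℕ) = 0 then ((2 * gv N u 0 : ℝ) : ℂ) else toC N u ((i:ℕ) - (j:ℕ))) := by
  rw [Tmat, toC_eq, toC_eq]
  by_cases h : (i : ℕ) ≤ (j : ℕ) <;> by_cases h2 : (j:ℕ) - (i:ℕ) = 0 <;>
    by_cases h3 : (i:ℕ) - (j:ℕ) = 0 <;>
    simp [h, h2, h3, gv, RCLike.star_def]

lemma Tmat_eq' (N : ℕ) (u : Fin (2*N-1) → ℝ) (i j : ℕ) (hi : i < N) (hj : j < N) :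
    Tmat N u ⟨i,hi⟩ ⟨j,hj⟩ = if i ≤ j then
        (if j - i = 0 then ((2 * gv N u 0 : ℝ) : ℂ) else toC N u (j - i))
      else conj (if i - j = 0 then ((2 * gv N u 0 : ℝ) : ℂ) else toC N u (i - j)) :=
  Tmat_eq N u ⟨i,hi⟩ ⟨j,hj⟩

lemma pairing (N : ℕ) (hN : 1 ≤ N) (z u : Fin (2*N-1) → ℝ) :
    ∑ i, z i * u i
      = (toC N z 0).re * (toC N u 0).re
        + ∑ k ∈ Finset.Ico 1 N, (toC N z k * conj (toC N u k)).re := by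
  have h1 : ∑ i, z i * u i = ∑ j ∈ Finset.range (2*N-1), gv N z j * gv N u j := by
    rw [← Fin.sum_univ_eq_sum_range (fun j => gv N z j * gv N u j) (2*N-1)]
    refine Finset.sum_congr rfl ?_
    intro i _
    show z i * u i = gv N z i * gv N u i
    rw [gv, gv, dif_pos i.isLt, dif_pos i.isLt]
  have h3 : ∑ j ∈ Finset.Ico N (2*N-1), gv N z j * gv N u j
      = ∑ k ∈ Finset.Ico 1 N, gv N z (N-1+k) * gv N u (N-1+k) := by
    refine Finset.sum_nbij' (i := fun j => j - (N-1)) (j := fun k => N-1+k) ?_ ?_ ?_ ?_ ?_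
    · intro j hj; simp only [Finset.mem_Ico] at hj ⊢; omega
    · intro k hk; simp only [Finset.mem_Ico] at hk ⊢; omega
    · intro j hj; simp only [Finset.mem_Ico] at hj; beta_reduce; omega
    · intro k hk; simp only [Finset.mem_Ico] at hk; beta_reduce; omega
    · intro j hj
      simp only [Finset.mem_Ico] at hj
      have : N-1+(j-(N-1)) = j := by omega
      rw [this]
  have h4 : ∀ k ∈ Finset.Ico 1 N, (toC N z k * conj (toC N u k)).re
      = gv N z k * gv N u k + gv N z (N-1+k) * gv N u (N-1+k) := by
    intro k hk
    simp only [Finset.mem_Ico] at hk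
    rw [toC_eq, toC_eq, if_neg (by omega), if_neg (by omega)]
    rw [map_add, _root_.map_mul, Complex.conj_I, Complex.conj_ofReal, Complex.conj_ofReal]
    simp only [Complex.add_re, Complex.mul_re, Complex.mul_im, Complex.add_im,
      Complex.ofReal_re, Complex.ofReal_im, Complex.I_re, Complex.I_im, Complex.neg_re,
      Complex.neg_im]
    ring
  rw [h1, Finset.range_eq_Ico,
    ← Finset.sum_Ico_consecutive (fun j => gv N z j * gv N u j)
      (by omega : (0:ℕ) ≤ N) (by omega : N ≤ 2*N-1),
    Finset.sum_eq_sum_Ico_succ_bot (by omega : (0:ℕ) < N), h3,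
    Finset.sum_congr rfl h4, Finset.sum_add_distrib]
  rw [toC_eq, toC_eq, if_pos rfl, if_pos rfl]
  simp only [Complex.ofReal_re]
  ring

lemma sum_square (f : ℕ → ℕ → ℂ) (N : ℕ) :
    ∑ i ∈ Finset.range N, ∑ j ∈ Finset.range N, f i j
      = ∑ i ∈ Finset.range N, f i i
        + ∑ k ∈ Finset.Ico 1 N, ((∑ i ∈ Finset.range (N-k), f i (i+k))
            + (∑ i ∈ Finset.range (N-k), f (i+k) i)) := by
  induction N with
  | zero => simp
  | succ N ih =>
    rcases Nat.eq_zero_or_pos N with hN | hN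
    · subst hN; simp
    simp only [Finset.sum_range_succ]
    rw [Finset.sum_add_distrib, ih]
    have hk : ∀ k ∈ Finset.Ico 1 (N+1),
        ((∑ i ∈ Finset.range (N+1-k), f i (i+k)) + (∑ i ∈ Finset.range (N+1-k), f (i+k) i))
        = (((∑ i ∈ Finset.range (N-k), f i (i+k)) + (∑ i ∈ Finset.range (N-k), f (i+k) i))
            + (f (N-k) N + f N (N-k))) := by
      intro k hk
      simp only [Finset.mem_Ico] at hk
      have h1 : N+1-k = (N-k)+1 := by omega
      have h2 : N-k+k = N := by omega
      rw [h1, Finset.sum_range_succ, Finset.sum_range_succ, h2]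
      ring
    rw [Finset.sum_congr rfl hk, Finset.sum_add_distrib, Finset.sum_add_distrib]
    rw [Finset.sum_Ico_succ_top (by omega : 1 ≤ N)]
    have hz : ((∑ i ∈ Finset.range (N-N), f i (i+N)) + (∑ i ∈ Finset.range (N-N), f (i+N) i)) = 0 := by
      simp
    rw [hz]
    have h5 : ∑ k ∈ Finset.Ico 1 (N+1), f (N-k) N = ∑ i ∈ Finset.range N, f i N := by
      refine Finset.sum_nbij' (i := fun k => N - k) (j := fun i => N - i) ?_ ?_ ?_ ?_ ?_
      · intro k hk; simp only [Finset.mem_Ico] at hk; simp only [Finset.mem_range]; omega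
      · intro i hi; simp only [Finset.mem_range] at hi; simp only [Finset.mem_Ico]; omega
      · intro k hk; simp only [Finset.mem_Ico] at hk; beta_reduce; omega
      · intro i hi; simp only [Finset.mem_range] at hi; beta_reduce; omega
      · intro k _; rfl
    have h6 : ∑ k ∈ Finset.Ico 1 (N+1), f N (N-k) = ∑ i ∈ Finset.range N, f N i := by
      refine Finset.sum_nbij' (i := fun k => N - k) (j := fun i => N - i) ?_ ?_ ?_ ?_ ?_
      · intro k hk; simp only [Finset.mem_Ico] at hk; simp only [Finset.mem_range]; omega
      · intro i hi; simp only [Finset.mem_range] at hi; simp only [Finset.mem_Ico]; omega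
      · intro k hk; simp only [Finset.mem_Ico] at hk; beta_reduce; omega
      · intro i hi; simp only [Finset.mem_range] at hi; beta_reduce; omega
      · intro k _; rfl
    simp only [Finset.sum_add_distrib]
    rw [h5, h6]
    ring

lemma quad_form (N : ℕ) (u : Fin (2*N-1) → ℝ) (a : ℕ → ℂ) :
    dotProduct (star (fun i : Fin N => a (i:ℕ))) ((Tmat N u) *ᵥ (fun i : Fin N => a (i:ℕ)))
      = 2 * toC N u 0 * (∑ i ∈ Finset.range N, a i * conj (a i))
        + ∑ k ∈ Finset.Ico 1 N,
            (toC N u k * conj (∑ i ∈ Finset.range (N-k), a i * conj (a (i+k)))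
              + conj (toC N u k) * (∑ i ∈ Finset.range (N-k), a i * conj (a (i+k)))) := by
  classical
  set F : ℕ → ℕ → ℂ := fun i j =>
    if hi : i < N then if hj : j < N then conj (a i) * (Tmat N u ⟨i,hi⟩ ⟨j,hj⟩ * a j) else 0
    else 0 with hF
  have h0 : dotProduct (star (fun i : Fin N => a (i:ℕ))) ((Tmat N u) *ᵥ (fun i : Fin N => a (i:ℕ)))
      = ∑ i ∈ Finset.range N, ∑ j ∈ Finset.range N, F i j := by
    simp only [dotProduct, Matrix.mulVec, Pi.star_apply, RCLike.star_def]
    rw [← Fin.sum_univ_eq_sum_range (fun i => ∑ j ∈ Finset.range N, F i j) N]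
    refine Finset.sum_congr rfl ?_
    intro i _
    rw [Finset.mul_sum, ← Fin.sum_univ_eq_sum_range (fun j => F (i:ℕ) j) N]
    refine Finset.sum_congr rfl ?_
    intro j _
    simp only [hF]
    rw [dif_pos i.isLt, dif_pos j.isLt]
  rw [h0, sum_square]
  congr 1
  · rw [Finset.mul_sum]
    refine Finset.sum_congr rfl ?_
    intro i hi
    simp only [Finset.mem_range] at hi
    simp only [hF]
    rw [dif_pos hi, dif_pos hi]
    rw [Tmat_eq', if_pos (le_refl _), if_pos (by omega), toC_eq, if_pos rfl]
    push_cast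
    ring
  · refine Finset.sum_congr rfl ?_
    intro k hk
    simp only [Finset.mem_Ico] at hk
    congr 1
    · rw [map_sum, Finset.mul_sum]
      refine Finset.sum_congr rfl ?_
      intro i hi
      simp only [Finset.mem_range] at hi
      simp only [hF]
      rw [dif_pos (by omega), dif_pos (by omega)]
      rw [Tmat_eq', if_pos (by omega), if_neg (by omega),
        show i + k - i = k by omega, _root_.map_mul, Complex.conj_conj]
      ring
    · rw [Finset.mul_sum]
      refine Finset.sum_congr rfl ?_
      intro i hi
      simp only [Finset.mem_range] at hi
      simp only [hF]
      rw [dif_pos (by omega), dif_pos (by omega)]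
      rw [Tmat_eq', if_neg (by omega), show i + k - i = k by omega, if_neg (by omega)]
      ring

lemma conj_exp_real_mul_I (x : ℝ) :
    conj (Complex.exp ((x:ℂ) * Complex.I)) = Complex.exp (-((x:ℂ) * Complex.I)) := by
  rw [← Complex.exp_conj]
  congr 1
  rw [_root_.map_mul, Complex.conj_ofReal, Complex.conj_I]
  ring

lemma easy_dir (N : ℕ) (hN : 1 ≤ N) (z : Fin (2*N-1) → ℝ) (ω : ℝ)
    (hC : ∀ u : Fin (2*N-1) → ℝ, (Tmat N u).PosSemidef → 0 ≤ ∑ i, z i * u i) :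
    0 ≤ trigPoly N z ω := by
  classical
  set w : ℕ → ℝ := fun k => if k = 0 then 1/2 else if k < N then Real.cos (ω * k)
    else Real.sin (ω * ((k - (N-1) : ℕ))) with hw
  set u : Fin (2*N-1) → ℝ := fun i => w (i:ℕ) with hu
  have hgv : ∀ k, k < 2*N-1 → gv N u k = w k := by
    intro k hk
    rw [gv, dif_pos hk]
  have huc0 : toC N u 0 = ((1/2 : ℝ) : ℂ) := by
    rw [toC_eq, if_pos rfl, hgv 0 (by omega)]
    simp [hw]
  have huc : ∀ k, 1 ≤ k → k < N → toC N u k = Complex.exp ((↑(ω*k) : ℂ) * Complex.I) := by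
    intro k h1 h2
    rw [toC_eq, if_neg (by omega), hgv k (by omega), hgv (N-1+k) (by omega)]
    simp only [hw]
    rw [if_neg (by omega), if_pos h2, if_neg (by omega), if_neg (by omega)]
    rw [show N-1+k-(N-1) = k by omega]
    rw [Complex.exp_mul_I, ← Complex.ofReal_cos, ← Complex.ofReal_sin]
    push_cast
    ring
  have hT : ∀ i j : Fin N, Tmat N u i j
      = Complex.exp ((↑(ω*((j:ℕ):ℝ)) : ℂ) * Complex.I)
        * conj (Complex.exp ((↑(ω*((i:ℕ):ℝ)) : ℂ) * Complex.I)) := by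
    intro i j
    rw [Tmat_eq, conj_exp_real_mul_I, ← Complex.exp_add]
    by_cases hij : (i:ℕ) ≤ (j:ℕ)
    · rw [if_pos hij]
      by_cases he : (j:ℕ) - (i:ℕ) = 0
      · rw [if_pos he, hgv 0 (by omega)]
        have hw0 : w 0 = 1/2 := by simp [hw]
        rw [hw0]
        have hji : ((j:ℕ):ℝ) = ((i:ℕ):ℝ) := by
          have : (i:ℕ) = (j:ℕ) := by omega
          rw [this]
        rw [hji]
        rw [show (↑(ω*((i:ℕ):ℝ)) : ℂ) * Complex.I + -((↑(ω*((i:ℕ):ℝ)) : ℂ) * Complex.I) = 0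
          by ring, Complex.exp_zero]
        norm_num
      · rw [if_neg he, huc _ (by omega) (by omega)]
        congr 1
        have hsub : (((j:ℕ) - (i:ℕ) : ℕ) : ℝ) = ((j:ℕ):ℝ) - ((i:ℕ):ℝ) := by
          push_cast [Nat.cast_sub hij]
          ring
        push_cast [hsub]
        ring
    · rw [if_neg hij]
      have hji : (j:ℕ) ≤ (i:ℕ) := by omega
      rw [if_neg (by omega), huc _ (by omega) (by omega), conj_exp_real_mul_I]
      congr 1
      have hsub : (((i:ℕ) - (j:ℕ) : ℕ) : ℝ) = ((i:ℕ):ℝ) - ((j:ℕ):ℝ) := by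
        push_cast [Nat.cast_sub hji]
        ring
      push_cast [hsub]
      ring
  have hPSD : (Tmat N u).PosSemidef := by
    refine Matrix.posSemidef_iff_dotProduct_mulVec.mpr ⟨?_, ?_⟩
    · apply Matrix.ext
      intro i j
      rw [Matrix.conjTranspose_apply, hT, hT, RCLike.star_def, _root_.map_mul, Complex.conj_conj]
      ring
    · intro x
      set S : ℂ := ∑ j : Fin N, Complex.exp ((↑(ω*((j:ℕ):ℝ)) : ℂ) * Complex.I) * x j with hS
      have h1 : dotProduct (star x) ((Tmat N u) *ᵥ x) = conj S * S := by
        simp only [dotProduct, Matrix.mulVec, Pi.star_apply, RCLike.star_def, hT]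
        rw [hS, map_sum, Finset.sum_mul_sum]
        refine Finset.sum_congr rfl ?_
        intro i _
        rw [Finset.mul_sum]
        refine Finset.sum_congr rfl ?_
        intro j _
        rw [_root_.map_mul, conj_exp_real_mul_I]
        ring
      rw [h1, mul_comm, Complex.mul_conj]
      exact Complex.zero_le_real.2 (Complex.normSq_nonneg S)
  have hle := hC u hPSD
  have hpair := pairing N hN z u
  rw [huc0] at hpair
  have hterm : ∀ k ∈ Finset.Ico 1 N, (toC N z k * conj (toC N u k)).re
      = (toC N z k * Complex.exp (-Complex.I * ω * k)).re := by
    intro k hk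
    simp only [Finset.mem_Ico] at hk
    rw [huc k hk.1 hk.2, conj_exp_real_mul_I]
    congr 2
    push_cast
    ring
  rw [Finset.sum_congr rfl hterm] at hpair
  rw [trigPoly]
  rw [hpair] at hle
  simp only [Complex.ofReal_re] at hle
  linarith


def czf (N : ℕ) (z : Fin (2*N-1) → ℝ) : ℤ → ℂ := fun k =>
  if k = 0 then toC N z 0
  else if 1 ≤ k ∧ k ≤ (N:ℤ)-1 then conj (toC N z k.toNat)
  else if 1 ≤ -k ∧ -k ≤ (N:ℤ)-1 then toC N z (-k).toNat
  else 0

lemma toC_zero_real (N : ℕ) (z : Fin (2*N-1) → ℝ) : conj (toC N z 0) = toC N z 0 := by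
  rw [toC_eq, if_pos rfl, Complex.conj_ofReal]

lemma toC_zero_re (N : ℕ) (z : Fin (2*N-1) → ℝ) : (((toC N z 0).re : ℝ) : ℂ) = toC N z 0 := by
  rw [toC_eq, if_pos rfl, Complex.ofReal_re]

lemma czf_herm (N : ℕ) (z : Fin (2*N-1) → ℝ) (k : ℤ) : czf N z (-k) = conj (czf N z k) := by
  simp only [czf, neg_neg]
  by_cases h0 : k = 0
  · subst h0
    norm_num
    exact (toC_zero_real N z).symm
  by_cases hp : 1 ≤ k ∧ k ≤ (N:ℤ)-1
  · rw [if_neg (by omega), if_neg (by omega), if_pos hp, if_neg h0, if_pos hp,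
      Complex.conj_conj]
  by_cases hm : 1 ≤ -k ∧ -k ≤ (N:ℤ)-1
  · rw [if_neg (by omega), if_pos hm, if_neg h0, if_neg hp, if_pos hm]
  · rw [if_neg (by omega), if_neg (by omega), if_neg (by omega), if_neg h0, if_neg hp,
      if_neg hm, map_zero]

lemma czf_supp (N n : ℕ) (hNn : N = n+1) (z : Fin (2*N-1) → ℝ) :
    ∀ k : ℤ, (n:ℤ) < |k| → czf N z k = 0 := by
  intro k hk
  rw [lt_abs] at hk
  subst hNn
  simp only [czf]
  rw [if_neg (by omega), if_neg (by push_cast; omega), if_neg (by push_cast; omega)]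

lemma exp_inj_aux (t1 t2 : ℝ) (h1 : |t1 - t2| < 2) 
    (he : Complex.exp ((t1:ℂ)*Complex.I) = Complex.exp ((t2:ℂ)*Complex.I)) : t1 = t2 := by
  rw [Complex.exp_eq_exp_iff_exists_int] at he
  obtain ⟨k, hk⟩ := he
  have hk' : ((t1:ℝ):ℂ) = ((t2:ℝ):ℂ) + (k:ℂ) * (2*((Real.pi:ℝ):ℂ)) := by
    have h2 : ((t1:ℝ):ℂ) * Complex.I
        = (((t2:ℝ):ℂ) + (k:ℂ) * (2*((Real.pi:ℝ):ℂ))) * Complex.I := by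
      rw [hk]; ring
    exact mul_right_cancel₀ Complex.I_ne_zero h2
  have ht : t1 = t2 + (k:ℝ) * (2*Real.pi) := by exact_mod_cast hk'
  have hπ3 := Real.pi_gt_three
  have habs : |t1 - t2| < 2 := h1
  rw [abs_lt] at habs
  rcases lt_trichotomy (k:ℤ) 0 with hk0 | hk0 | hk0
  · have : (k:ℝ) ≤ -1 := by
      have h5 : k ≤ -1 := by omega
      exact_mod_cast h5
    nlinarith
  · rw [hk0] at ht; simp at ht; linarith [ht]
  · have : (1:ℝ) ≤ (k:ℝ) := by exact_mod_cast hk0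
    nlinarith

lemma Qf_czf (N n : ℕ) (hNn : N = n + 1) (z : Fin (2*N-1) → ℝ) (θ : ℝ) :
    Qf (czf N z) n θ = ((trigPoly N z θ : ℝ) : ℂ) := by
  rw [Qf, sumIccSym n (fun k => czf N z k * Complex.exp ((k:ℂ)*(θ:ℂ)*Complex.I))]
  have h0 : czf N z 0 * Complex.exp (((0:ℤ):ℂ)*(θ:ℂ)*Complex.I) = ((toC N z 0).re : ℂ) := by
    simp only [czf, reduceIte]
    norm_num
    exact (toC_zero_re N z).symm
  have hsum : ∑ k ∈ Finset.Icc (1:ℤ) (n:ℤ),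
        (czf N z k * Complex.exp ((k:ℂ)*(θ:ℂ)*Complex.I)
          + czf N z (-k) * Complex.exp (((-k : ℤ):ℂ)*(θ:ℂ)*Complex.I))
      = ∑ j ∈ Finset.Ico 1 N,
          ((2*((toC N z j * Complex.exp (-Complex.I*(θ:ℂ)*(j:ℂ))).re) : ℝ) : ℂ) := by
    refine Finset.sum_nbij' (i := Int.toNat) (j := fun (j:ℕ) => (j:ℤ)) ?_ ?_ ?_ ?_ ?_
    · intro k hk; simp only [Finset.mem_Icc] at hk; simp only [Finset.mem_Ico]; omega
    · intro j hj; simp only [Finset.mem_Ico] at hj; simp only [Finset.mem_Icc]; omega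
    · intro k hk; simp only [Finset.mem_Icc] at hk; beta_reduce; omega
    · intro j hj; simp only [Finset.mem_Ico] at hj; beta_reduce; omega
    · intro k hk
      simp only [Finset.mem_Icc] at hk
      have hcast : ((k.toNat : ℕ) : ℂ) = ((k : ℤ) : ℂ) := by
        have h1 : ((k.toNat : ℕ) : ℤ) = k := Int.toNat_of_nonneg (by omega)
        exact_mod_cast congrArg (fun x : ℤ => (x:ℂ)) h1
      have hczfk : czf N z k = conj (toC N z k.toNat) := by
        simp only [czf]
        rw [if_neg (by omega), if_pos (by subst hNn; push_cast; omega)]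
      have hczfmk : czf N z (-k) = toC N z k.toNat := by
        simp only [czf, neg_neg]
        rw [if_neg (by omega), if_neg (by omega), if_pos (by subst hNn; push_cast; omega)]
      rw [hczfk, hczfmk]
      set x : ℂ := toC N z k.toNat * Complex.exp (-Complex.I*(θ:ℂ)*((k.toNat:ℕ):ℂ)) with hx
      have e1 : Complex.exp (((-k : ℤ):ℂ)*(θ:ℂ)*Complex.I)
          = Complex.exp (-Complex.I*(θ:ℂ)*((k.toNat:ℕ):ℂ)) := by
        congr 1
        rw [hcast]
        push_cast
        ring
      have e2 : conj x = conj (toC N z k.toNat) * Complex.exp ((k:ℂ)*(θ:ℂ)*Complex.I) := by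
        rw [hx, _root_.map_mul, ← Complex.exp_conj]
        congr 1
        rw [_root_.map_mul, _root_.map_mul, map_neg, Complex.conj_I, Complex.conj_ofReal,
          map_natCast, hcast]
        ring
      rw [e1, ← e2]
      rw [add_comm, Complex.add_conj]
  rw [h0, hsum, trigPoly]
  push_cast
  all_goals rw [Finset.mul_sum]
  all_goals ring

lemma trig_shift (N : ℕ) (z : Fin (2*N-1) → ℝ) (θ : ℝ) (m : ℤ) :
    trigPoly N z (θ + m*(2*Real.pi)) = trigPoly N z θ := by
  rw [trigPoly, trigPoly]
  congr 2
  apply Finset.sum_congr rfl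
  intro k _
  have harg : Complex.exp (-Complex.I*((θ + m*(2*Real.pi) : ℝ):ℂ)*(k:ℂ))
      = Complex.exp (-Complex.I*(θ:ℂ)*(k:ℂ)) := by
    rw [show -Complex.I*((θ + m*(2*Real.pi) : ℝ):ℂ)*(k:ℂ)
        = -Complex.I*(θ:ℂ)*(k:ℂ) + ((-(m*k) : ℤ):ℂ) * (2*((Real.pi:ℝ):ℂ)*Complex.I) by
      push_cast; ring]
    rw [Complex.exp_add, Complex.exp_int_mul_two_pi_mul_I, mul_one]
  rw [harg]

lemma trig_nonneg_all (N : ℕ) (z : Fin (2*N-1) → ℝ)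
    (h : ∀ ω ∈ Set.Ico (0:ℝ) (2*Real.pi), 0 ≤ trigPoly N z ω) (θ : ℝ) :
    0 ≤ trigPoly N z θ := by
  have hπ := Real.pi_pos
  set m := ⌊θ / (2*Real.pi)⌋ with hm
  have h1 : (m:ℝ) * (2*Real.pi) ≤ θ := by
    have h1' := Int.floor_le (θ / (2*Real.pi))
    rw [le_div_iff₀ (by linarith)] at h1'
    exact h1'
  have h2 : θ < ((m:ℝ)+1) * (2*Real.pi) := by
    have h2' := Int.lt_floor_add_one (θ / (2*Real.pi))
    rw [div_lt_iff₀ (by linarith)] at h2'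
    exact_mod_cast h2'
  rw [add_mul, one_mul] at h2
  have h3 := h (θ - m*(2*Real.pi)) ⟨by linarith, by linarith⟩
  have h4 : trigPoly N z θ = trigPoly N z (θ - (m:ℝ)*(2*Real.pi)) := by
    conv_lhs => rw [show θ = (θ - (m:ℝ)*(2*Real.pi)) + (m:ℝ)*(2*Real.pi) by ring]
    rw [trig_shift]
  rw [h4]
  exact h3

lemma hard_dir (N : ℕ) (hN : 1 ≤ N) (z : Fin (2*N-1) → ℝ)
    (hZ : ∀ ω ∈ Set.Ico (0:ℝ) (2*Real.pi), 0 ≤ trigPoly N z ω)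
    (u : Fin (2*N-1) → ℝ) (hPSD : (Tmat N u).PosSemidef) : 0 ≤ ∑ i, z i * u i := by
  obtain ⟨n, rfl⟩ : ∃ n, N = n + 1 := ⟨N-1, by omega⟩
  have hall := trig_nonneg_all (n+1) z hZ
  have hpos : ∀ θ : ℝ, 0 ≤ (Qf (czf (n+1) z) n θ).re := by
    intro θ
    rw [Qf_czf (n+1) n rfl, Complex.ofReal_re]
    exact hall θ
  obtain ⟨p, hdegp, hp⟩ := fr_main n (czf (n+1) z) (czf_herm (n+1) z)
    (czf_supp (n+1) n rfl z) hpos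
  have hdegP' : (p * conjReflect n p).natDegree ≤ 2*n := by
    refine le_trans Polynomial.natDegree_mul_le ?_
    have := natDegree_conjReflect n p
    omega
  have hQP' : ∀ θ : ℝ, Qf (czf (n+1) z) n θ
      = Complex.exp (-(n:ℂ)*(θ:ℂ)*Complex.I)
        * (p * conjReflect n p).eval (Complex.exp ((θ:ℂ)*Complex.I)) := by
    intro θ
    have hw0 : Complex.exp ((θ:ℂ)*Complex.I) ≠ 0 := Complex.exp_ne_zero _
    have hwc : conj (Complex.exp ((θ:ℂ)*Complex.I)) = (Complex.exp ((θ:ℂ)*Complex.I))⁻¹ := by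
      rw [← Complex.exp_conj, ← Complex.exp_neg]
      congr 1
      rw [_root_.map_mul, Complex.conj_ofReal, Complex.conj_I]
      ring
    rw [hp θ, Polynomial.eval_mul, eval_conjReflect n p hdegp hw0]
    rw [show (conj (Complex.exp ((θ:ℂ)*Complex.I)))⁻¹ = Complex.exp ((θ:ℂ)*Complex.I) by
      rw [hwc, inv_inv]]
    have hwn : Complex.exp (-(n:ℂ)*(θ:ℂ)*Complex.I) * (Complex.exp ((θ:ℂ)*Complex.I))^n = 1 := by
      rw [← Complex.exp_nat_mul, ← Complex.exp_add,
        show -(n:ℂ)*(θ:ℂ)*Complex.I + (n:ℂ)*((θ:ℂ)*Complex.I) = 0 by ring]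
      exact Complex.exp_zero
    calc ((Complex.normSq (p.eval (Complex.exp ((θ:ℂ)*Complex.I))) : ℝ) : ℂ)
        = p.eval (Complex.exp ((θ:ℂ)*Complex.I))
          * conj (p.eval (Complex.exp ((θ:ℂ)*Complex.I))) := (Complex.mul_conj _).symm
      _ = (Complex.exp (-(n:ℂ)*(θ:ℂ)*Complex.I) * (Complex.exp ((θ:ℂ)*Complex.I))^n)
            * (p.eval (Complex.exp ((θ:ℂ)*Complex.I))
              * conj (p.eval (Complex.exp ((θ:ℂ)*Complex.I)))) := by rw [hwn, one_mul]
      _ = Complex.exp (-(n:ℂ)*(θ:ℂ)*Complex.I)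
            * (p.eval (Complex.exp ((θ:ℂ)*Complex.I))
              * ((Complex.exp ((θ:ℂ)*Complex.I))^n
                * conj (p.eval (Complex.exp ((θ:ℂ)*Complex.I))))) := by ring
  set c'' : ℤ → ℂ := fun k => if |k| ≤ (n:ℤ) then (p * conjReflect n p).coeff (k+n).toNat else 0
    with hc''def
  have hPc'' : Pc c'' n = p * conjReflect n p := by
    apply Polynomial.ext
    intro j
    rw [coeff_Pc]
    by_cases hj : j ≤ 2*n
    · rw [if_pos hj]
      simp only [hc''def]
      rw [if_pos (by rw [abs_le]; omega)]
      congr 1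
      omega
    · rw [if_neg hj, eq_comm]
      exact Polynomial.coeff_eq_zero_of_natDegree_lt (by omega)
  have hQsame : ∀ θ : ℝ, Qf c'' n θ = Qf (czf (n+1) z) n θ := by
    intro θ
    rw [Qf_eq_eval, hPc'', hQP' θ]
  have hzero : Pc (fun k => czf (n+1) z k - c'' k) n = 0 := by
    apply Polynomial.eq_zero_of_infinite_isRoot
    apply Set.Infinite.mono (s := (fun θ : ℝ => Complex.exp ((θ:ℂ)*Complex.I)) '' (Set.Ioo 0 1))
    · rintro x ⟨θ, _, rfl⟩
      show Polynomial.eval _ _ = 0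
      have h1 : Qf (fun k => czf (n+1) z k - c'' k) n θ = 0 := by
        have h2 : Qf (fun k => czf (n+1) z k - c'' k) n θ
            = Qf (czf (n+1) z) n θ - Qf c'' n θ := by
          rw [Qf, Qf, Qf, ← Finset.sum_sub_distrib]
          apply Finset.sum_congr rfl
          intro k _
          ring
        rw [h2, hQsame θ, sub_self]
      rw [Qf_eq_eval] at h1
      exact (mul_eq_zero.1 h1).resolve_left (Complex.exp_ne_zero _)
    · apply Set.Infinite.image
      · intro t1 ht1 t2 ht2 he
        obtain ⟨h11, h12⟩ := ht1
        obtain ⟨h21, h22⟩ := ht2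
        exact exp_inj_aux t1 t2 (by rw [abs_lt]; constructor <;> linarith) he
      · exact Set.infinite_coe_iff.1 (Set.Ioo.infinite (by norm_num))
  have hcoe : ∀ k : ℤ, |k| ≤ (n:ℤ) → czf (n+1) z k = c'' k := by
    intro k hk
    rw [abs_le] at hk
    have h1 : (Pc (fun k => czf (n+1) z k - c'' k) n).coeff (k+n).toNat = 0 := by
      rw [hzero, Polynomial.coeff_zero]
    rw [coeff_Pc, if_pos (by omega)] at h1
    rw [show (((k+(n:ℤ)).toNat : ℕ) : ℤ) - (n:ℤ) = k by omega] at h1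
    exact sub_eq_zero.1 h1
  have hauto : ∀ k : ℕ, k ≤ n → (p * conjReflect n p).coeff (n - k)
      = ∑ i ∈ Finset.range (n-k+1), p.coeff i * conj (p.coeff (i+k)) := by
    intro k hk
    rw [Polynomial.coeff_mul, Finset.Nat.sum_antidiagonal_eq_sum_range_succ_mk]
    apply Finset.sum_congr rfl
    intro i hi
    simp only [Finset.mem_range] at hi
    rw [coeff_conjReflect, if_pos (by omega), show n - (n - k - i) = i + k by omega]
  have hzc0 : toC (n+1) z 0
      = ∑ i ∈ Finset.range (n+1), p.coeff i * conj (p.coeff (i+0)) := by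
    have h1 : czf (n+1) z 0 = toC (n+1) z 0 := by simp only [czf, reduceIte]
    have h2 := hcoe 0 (by simp)
    rw [h1] at h2
    rw [h2]
    simp only [hc''def]
    rw [if_pos (by simp), show ((0:ℤ)+(n:ℤ)).toNat = n - 0 by omega, hauto 0 (by omega),
      show n - 0 + 1 = n + 1 by omega]
  have hzck : ∀ k : ℕ, 1 ≤ k → k < n+1 → toC (n+1) z k
      = ∑ i ∈ Finset.range (n+1-k), p.coeff i * conj (p.coeff (i+k)) := by
    intro k h1 h2
    have h3 : czf (n+1) z (-(k:ℤ)) = toC (n+1) z k := by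
      simp only [czf, neg_neg]
      rw [if_neg (by omega), if_neg (by omega), if_pos (by push_cast; omega)]
      all_goals simp
    have h4 := hcoe (-(k:ℤ)) (by rw [abs_le]; omega)
    rw [h3] at h4
    rw [h4]
    simp only [hc''def]
    rw [if_pos (by rw [abs_le]; omega), show ((-(k:ℤ))+(n:ℤ)).toNat = n - k by omega,
      hauto k (by omega), show n - k + 1 = n + 1 - k by omega]
  have hquad := quad_form (n+1) u p.coeff
  have hform : dotProduct (star (fun i : Fin (n+1) => p.coeff (i:ℕ)))
      ((Tmat (n+1) u) *ᵥ (fun i : Fin (n+1) => p.coeff (i:ℕ)))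
      = ((2 * ∑ i, z i * u i : ℝ) : ℂ) := by
    rw [hquad]
    have hS0 : ∑ i ∈ Finset.range (n+1), p.coeff i * conj (p.coeff i) = toC (n+1) z 0 := by
      rw [hzc0]
      apply Finset.sum_congr rfl
      intro i _
      rw [show i + 0 = i by omega]
    rw [hS0]
    have hterm : ∀ k ∈ Finset.Ico 1 (n+1),
        (toC (n+1) u k * conj (∑ i ∈ Finset.range (n+1-k), p.coeff i * conj (p.coeff (i+k)))
          + conj (toC (n+1) u k) * (∑ i ∈ Finset.range (n+1-k), p.coeff i * conj (p.coeff (i+k))))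
        = ((2 * ((toC (n+1) z k) * conj (toC (n+1) u k)).re : ℝ) : ℂ) := by
      intro k hk
      simp only [Finset.mem_Ico] at hk
      rw [← hzck k hk.1 hk.2]
      calc toC (n+1) u k * conj (toC (n+1) z k) + conj (toC (n+1) u k) * toC (n+1) z k
          = (toC (n+1) z k * conj (toC (n+1) u k))
            + conj (toC (n+1) z k * conj (toC (n+1) u k)) := by
            rw [_root_.map_mul, Complex.conj_conj]
            ring
        _ = ((2 * ((toC (n+1) z k) * conj (toC (n+1) u k)).re : ℝ) : ℂ) :=
            Complex.add_conj _
    rw [Finset.sum_congr rfl hterm]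
    rw [pairing (n+1) (by omega) z u]
    rw [← toC_zero_re (n+1) z, ← toC_zero_re (n+1) u]
    push_cast [Finset.mul_sum]
    simp only [Complex.ofReal_re]
    ring_nf
    rw [Finset.sum_mul]
  have hge := (Matrix.posSemidef_iff_dotProduct_mulVec.mp hPSD).2 (fun i : Fin (n+1) => p.coeff (i:ℕ))
  rw [hform] at hge
  have := Complex.zero_le_real.1 hge
  linarith

end FR
end FRsec

/-- `z ∈ C*` iff `Z(ω) ≥ 0` for all `ω ∈ [0, 2π)`. -/
theorem stmt5 (N : ℕ) (hN : 1 ≤ N) (z : Fin (2*N-1) → ℝ) :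
    (∀ u : Fin (2*N-1) → ℝ, (Tmat N u).PosSemidef → 0 ≤ ∑ i, z i * u i) ↔
      (∀ ω ∈ Set.Ico (0:ℝ) (2*π), 0 ≤ trigPoly N z ω) := by
  constructor
  · intro hC ω _
    exact FR.easy_dir N hN z ω hC
  · intro hZ u hPSD
    exact FR.hard_dir N hN z hZ u hPSD

end
end

section
/- If z ∈ ℝ^(2N-1) is a finite autocorrelation sequence, i.e., there exists q ∈ ℂ^N with (z_ℂ)_k = Σ_{n=0}^{N-1-k} conj(q_n) q_{n+k} for k = 0,...,N-1, then for every u ∈ ℝ^(2N-1) with T(u) positive semidefinite one has zᵀ u ≥ 0. In fact zᵀ u = (1/2) qᵀ T(u) conj(q). -/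
open Complex Matrix ComplexOrder Finset


noncomputable section

def gf (N : ℕ) (u : Fin (2*N-1) → ℝ) : ℕ → ℝ := fun k => if h : k < 2*N-1 then u ⟨k, h⟩ else 0

def rf (N : ℕ) (u : Fin (2*N-1) → ℝ) : ℕ → ℂ := fun k =>
  if k = 0 then ((2 * gf N u 0 : ℝ) : ℂ)
  else ((gf N u k : ℝ) : ℂ) + Complex.I * ((gf N u (N-1+k) : ℝ) : ℂ)

lemma Tmat_eq (N : ℕ) (u : Fin (2*N-1) → ℝ) (n m : Fin N) :
    Tmat N u n m = if (n : ℕ) ≤ (m : ℕ) then rf N u ((m:ℕ) - n) else star (rf N u ((n:ℕ) - m)) :=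
  rfl

lemma toC_eq (N : ℕ) (z : Fin (2*N-1) → ℝ) (k : ℕ) :
    toC N z k = if k = 0 then ((gf N z 0 : ℝ) : ℂ)
      else ((gf N z k : ℝ) : ℂ) + Complex.I * ((gf N z (N-1+k) : ℝ) : ℂ) := rfl

lemma oneterm (N : ℕ) (u : Fin (2*N-1) → ℝ) (q : Fin N → ℂ) (n m : Fin N) :
    ∑ k : Fin N, ((if (m:ℕ) = (n:ℕ) + (k:ℕ) then rf N u k * (q n * star (q m)) else 0)
      + (if ((n:ℕ) = (m:ℕ) + (k:ℕ) ∧ (k:ℕ) ≠ 0) then star (rf N u k) * (q n * star (q m)) else 0))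
    = q n * Tmat N u n m * star (q m) := by
  rw [Tmat_eq]
  rcases le_or_gt (n:ℕ) (m:ℕ) with h | h
  · rw [if_pos h]
    have hk : (m:ℕ) - n < N := lt_of_le_of_lt (Nat.sub_le _ _) m.isLt
    rw [Finset.sum_eq_single ⟨(m:ℕ)-n, hk⟩]
    · simp only
      rw [if_pos (by omega), if_neg (by omega)]
      ring
    · intro b _ hb
      rw [if_neg (by simp [Fin.ext_iff] at hb; omega), if_neg (by omega)]
      simp
    · simp
  · rw [if_neg (by omega)]
    have hk : (n:ℕ) - m < N := lt_of_le_of_lt (Nat.sub_le _ _) n.isLt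
    rw [Finset.sum_eq_single ⟨(n:ℕ)-m, hk⟩]
    · simp only
      rw [if_neg (by omega), if_pos (by constructor <;> omega)]
      ring
    · intro b _ hb
      rw [if_neg (by omega), if_neg (by simp [Fin.ext_iff] at hb; omega)]
      simp
    · simp

lemma arith (a b c d : ℝ) :
    ((a:ℂ) + Complex.I * b) * star ((c:ℂ) + Complex.I * d)
      + star ((a:ℂ) + Complex.I * b) * ((c:ℂ) + Complex.I * d)
    = ((2 * (c*a + d*b) : ℝ) : ℂ) := by
  simp only [star_add, star_mul', Complex.star_def, Complex.conj_ofReal, Complex.conj_I]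
  push_cast
  ring_nf
  rw [Complex.I_sq]
  ring

/-- a finite autocorrelation sequence is in `C*`, with
`zᵀu = (1/2) qᵀ T(u) q̄`. -/
theorem stmt6 (N : ℕ) (hN : 1 ≤ N) (z : Fin (2*N-1) → ℝ) (q : Fin N → ℂ)
    (hz : ∀ k : Fin N,
      toC N z k = ∑ n : Fin N, ∑ m : Fin N,
        if (m : ℕ) = (n : ℕ) + (k : ℕ) then star (q n) * q m else 0) :
    ∀ u : Fin (2*N-1) → ℝ, (Tmat N u).PosSemidef →
      0 ≤ ∑ i, z i * u i ∧
      ((∑ i, z i * u i : ℝ) : ℂ) =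
        (1/2) * ∑ n : Fin N, ∑ m : Fin N, q n * Tmat N u n m * star (q m) := by
  have hB : ∀ k : Fin N, star (toC N z k)
      = ∑ n : Fin N, ∑ m : Fin N, (if (m:ℕ) = (n:ℕ) + (k:ℕ) then q n * star (q m) else 0) := by
    intro k
    rw [hz k, star_sum]
    refine Finset.sum_congr rfl fun n _ => ?_
    rw [star_sum]
    refine Finset.sum_congr rfl fun m _ => ?_
    split_ifs <;> simp [star_mul', star_star, mul_comm]
  have hC : ∀ k : Fin N, toC N z k
      = ∑ n : Fin N, ∑ m : Fin N, (if (n:ℕ) = (m:ℕ) + (k:ℕ) then q n * star (q m) else 0) := by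
    intro k
    rw [hz k, Finset.sum_comm]
    exact Finset.sum_congr rfl fun n _ => Finset.sum_congr rfl fun m _ => by
      split_ifs <;> [ring; rfl]
  intro u hU
  have hS : ∑ k : Fin N, (rf N u k * star (toC N z k)
        + if (k:ℕ) ≠ 0 then star (rf N u k) * toC N z k else 0)
      = ∑ n : Fin N, ∑ m : Fin N, q n * Tmat N u n m * star (q m) := by
    have step : ∀ k : Fin N, (rf N u k * star (toC N z k)
          + if (k:ℕ) ≠ 0 then star (rf N u k) * toC N z k else 0)
        = ∑ n : Fin N, ∑ m : Fin N,
            ((if (m:ℕ) = (n:ℕ) + (k:ℕ) then rf N u k * (q n * star (q m)) else 0)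
             + (if ((n:ℕ) = (m:ℕ) + (k:ℕ) ∧ (k:ℕ) ≠ 0) then star (rf N u k) * (q n * star (q m)) else 0)) := by
      intro k
      simp_rw [Finset.sum_add_distrib]
      congr 1
      · rw [hB k, Finset.mul_sum]
        refine Finset.sum_congr rfl fun n _ => ?_
        rw [Finset.mul_sum]
        refine Finset.sum_congr rfl fun m _ => ?_
        split_ifs <;> simp
      · by_cases h0 : (k:ℕ) = 0
        · rw [if_neg (by simpa using h0)]
          refine (Finset.sum_eq_zero fun n _ => Finset.sum_eq_zero fun m _ => ?_).symm
          rw [if_neg (by tauto)]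
        · simp only [ne_eq, h0, not_false_iff, and_true]
          rw [if_pos trivial, hC k, Finset.mul_sum]
          refine Finset.sum_congr rfl fun n _ => ?_
          rw [Finset.mul_sum]
          refine Finset.sum_congr rfl fun m _ => ?_
          split_ifs <;> simp
    rw [Finset.sum_congr rfl fun k _ => step k, Finset.sum_comm]
    refine Finset.sum_congr rfl fun n _ => ?_
    rw [Finset.sum_comm]
    exact Finset.sum_congr rfl fun m _ => oneterm N u q n m
  -- compute the k-sum as a real number
  set F : ℕ → ℂ := fun k => rf N u k * star (toC N z k)
        + if k ≠ 0 then star (rf N u k) * toC N z k else 0 with hF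
  set G : ℕ → ℂ := fun i => ((gf N z i * gf N u i : ℝ) : ℂ) with hG
  have hFk : ∑ k : Fin N, F k = ∑ k ∈ Finset.range N, F k := Fin.sum_univ_eq_sum_range F N
  have hsplit : ∑ k ∈ Finset.range N, F k
      = F 0 + ∑ i ∈ Finset.range (N-1), F (i+1) := by
    have h := Finset.sum_range_succ' F (N-1)
    rw [show N-1+1 = N by omega] at h
    rw [h]; ring
  have hGsum : ((∑ i, z i * u i : ℝ) : ℂ) = ∑ i ∈ Finset.range (2*N-1), G i := by
    push_cast
    rw [← Fin.sum_univ_eq_sum_range G (2*N-1)]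
    refine Finset.sum_congr rfl fun i _ => ?_
    simp [hG, gf, dif_pos i.isLt]
  have hGsplit : ∑ i ∈ Finset.range (2*N-1), G i
      = G 0 + ∑ i ∈ Finset.range (N-1), (G (i+1) + G (N+i)) := by
    rw [show 2*N-1 = (N-1)+(N-1)+1 by omega, Finset.sum_range_succ', Finset.sum_range_add,
      Finset.sum_add_distrib]
    have : ∀ i ∈ Finset.range (N-1), G ((N-1)+i+1) = G (N+i) := fun i _ => by
      congr 1; omega
    rw [Finset.sum_congr rfl this]; ring
  have hF0 : F 0 = 2 * G 0 := by
    simp only [hF, hG, if_neg (by simp : ¬ (0:ℕ) ≠ 0), add_zero]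
    rw [rf, toC_eq, if_pos rfl, if_pos rfl]
    simp [Complex.conj_ofReal]
    ring
  have hFi : ∀ i ∈ Finset.range (N-1), F (i+1) = 2 * (G (i+1) + G (N+i)) := by
    intro i hi
    rw [Finset.mem_range] at hi
    simp only [hF, hG, if_pos (by omega : (i+1) ≠ 0)]
    rw [rf, toC_eq, if_neg (by omega), if_neg (by omega),
      show N-1+(i+1) = N+i by omega]
    rw [arith]
    push_cast; ring
  have key : ((∑ i, z i * u i : ℝ) : ℂ)
      = (1/2) * ∑ n : Fin N, ∑ m : Fin N, q n * Tmat N u n m * star (q m) := by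
    rw [← hS, hFk, hsplit, hF0, Finset.sum_congr rfl hFi, hGsum, hGsplit,
      ← Finset.mul_sum]
    ring
  refine ⟨?_, key⟩
  -- positivity
  have hp := (posSemidef_iff_dotProduct_mulVec.mp hU).2 (star q)
  have hpS : star (star q) ⬝ᵥ (Tmat N u) *ᵥ (star q)
      = ∑ n : Fin N, ∑ m : Fin N, q n * Tmat N u n m * star (q m) := by
    simp [dotProduct, mulVec, Finset.mul_sum, mul_assoc]
  rw [hpS] at hp
  have : (0:ℂ) ≤ ((∑ i, z i * u i : ℝ) : ℂ) := by
    rw [key]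
    exact mul_nonneg (by norm_num [Complex.le_def]) hp
  exact_mod_cast this
end
end

section
/- Let f(v, x, u) = ‖x − y‖₂² + τ(v + wᵀu) with τ > 0. Then f is bounded below on the cone K = {(v,x,u) : [[T(u),x],[xᴴ,v]] ⪰ 0} if and only if w ∈ C*, i.e., wᵀu ≥ 0 for all u with T(u) ⪰ 0. Moreover, when w ∈ C*, f(μ) ≥ 0 for all μ ∈ K. -/
open Complex Matrix ComplexOrder

noncomputable section

/-- The block matrix `[[T(u), x], [xᴴ, v]]`. -/
def Kmat (N : ℕ) (v : ℝ) (x : Fin N → ℂ) (u : Fin (2*N-1) → ℝ) :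
    Matrix (Fin N ⊕ Unit) (Fin N ⊕ Unit) ℂ :=
  Matrix.fromBlocks (Tmat N u) (fun i _ => x i) (fun _ j => star (x j)) (fun _ _ => (v : ℂ))

/-- The cone `K = {(v,x,u) : [[T(u),x],[xᴴ,v]] ⪰ 0}`. -/
def Kcone (N : ℕ) : Set (ℝ × (Fin N → ℂ) × (Fin (2*N-1) → ℝ)) :=
  {p | (Kmat N p.1 p.2.1 p.2.2).PosSemidef}

/-- The objective `f(v,x,u) = ‖x-y‖₂² + τ(v + wᵀu)`. -/
def fobj (N : ℕ) (y : Fin N → ℂ) (τ : ℝ) (w : Fin (2*N-1) → ℝ)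
    (p : ℝ × (Fin N → ℂ) × (Fin (2*N-1) → ℝ)) : ℝ :=
  (∑ i, Complex.normSq (p.2.1 i - y i)) + τ * (p.1 + ∑ i, w i * p.2.2 i)

lemma tmat_smul (N : ℕ) (t : ℝ) (u : Fin (2*N-1) → ℝ) :
    Tmat N (t • u) = (t : ℂ) • Tmat N u := by
  ext n m
  simp only [Tmat, Pi.smul_apply, smul_eq_mul, Matrix.smul_apply]
  have hg : ∀ k : ℕ, (if h : k < 2*N-1 then t * u ⟨k, h⟩ else 0)
      = t * (if h : k < 2*N-1 then u ⟨k, h⟩ else 0) := by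
    intro k; split <;> simp
  simp only [hg]
  split <;> split <;>
    (try simp only [Complex.star_def, map_add, _root_.map_mul, Complex.conj_ofReal,
      Complex.conj_I]) <;>
    push_cast <;> ring

lemma kmat_psd_tmat {N v x u} (h : (Kmat N v x u).PosSemidef) : (Tmat N u).PosSemidef := by
  have := h.submatrix Sum.inl
  have he : (Kmat N v x u).submatrix Sum.inl Sum.inl = Tmat N u := by
    ext i j; simp [Kmat, submatrix_apply, fromBlocks_apply₁₁]; rfl
  rwa [he] at this

lemma kmat_psd_v {N v x u} (h : (Kmat N v x u).PosSemidef) : 0 ≤ v := by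
  have h2 := (h.submatrix (Sum.inr : Unit → Fin N ⊕ Unit)).dotProduct_mulVec_nonneg (fun _ => 1)
  simp [Kmat, dotProduct, mulVec, submatrix_apply, fromBlocks_apply₂₂] at h2
  exact Complex.zero_le_real.mp h2

lemma kmat_zero_psd {N u} (h : (Tmat N u).PosSemidef) : (Kmat N 0 0 u).PosSemidef := by
  have := h.conjTranspose_mul_mul_same
    ((1 : Matrix (Fin N ⊕ Unit) (Fin N ⊕ Unit) ℂ).submatrix Sum.inl id)
  have he : ((1 : Matrix (Fin N ⊕ Unit) (Fin N ⊕ Unit) ℂ).submatrix Sum.inl id)ᴴ * Tmat N u *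
      ((1 : Matrix (Fin N ⊕ Unit) (Fin N ⊕ Unit) ℂ).submatrix Sum.inl id) = Kmat N 0 0 u := by
    ext j j'
    cases j <;> cases j' <;>
      simp [Kmat, Matrix.mul_apply, submatrix_apply, one_apply, Finset.mul_sum,
        Finset.sum_ite_eq, Finset.sum_ite_eq'] <;> rfl
  rwa [he] at this

lemma psd_smul {N : ℕ} {M : Matrix (Fin N) (Fin N) ℂ} (h : M.PosSemidef) {t : ℝ} (ht : 0 ≤ t) :
    ((t : ℂ) • M).PosSemidef := by
  refine .of_dotProduct_mulVec_nonneg ?_ fun z => ?_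
  · unfold Matrix.IsHermitian
    rw [conjTranspose_smul, h.1.eq]
    congr 1
    simp [Complex.star_def, Complex.conj_ofReal]
  · rw [smul_mulVec, dotProduct_smul]
    exact smul_nonneg (by exact_mod_cast Complex.zero_le_real.mpr ht) (h.dotProduct_mulVec_nonneg z)

lemma part2 (N : ℕ) (y : Fin N → ℂ) (τ : ℝ) (hτ : 0 < τ) (w : Fin (2*N-1) → ℝ)
    (hw : ∀ u : Fin (2*N-1) → ℝ, (Tmat N u).PosSemidef → 0 ≤ ∑ i, w i * u i) :
    ∀ p ∈ Kcone N, 0 ≤ fobj N y τ w p := by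
  intro p hp
  have hT := kmat_psd_tmat hp
  have hv := kmat_psd_v hp
  have hwu := hw _ hT
  refine add_nonneg (Finset.sum_nonneg fun i _ => Complex.normSq_nonneg _) ?_
  exact mul_nonneg hτ.le (add_nonneg hv hwu)

/-- for τ > 0, f is bounded below on K iff w ∈ C*, and then f ≥ 0 on K. -/
theorem stmt10 (N : ℕ) (hN : 1 ≤ N) (y : Fin N → ℂ) (τ : ℝ) (hτ : 0 < τ)
    (w : Fin (2*N-1) → ℝ) :
    ((∃ B : ℝ, ∀ p ∈ Kcone N, B ≤ fobj N y τ w p) ↔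
      (∀ u : Fin (2*N-1) → ℝ, (Tmat N u).PosSemidef → 0 ≤ ∑ i, w i * u i)) ∧
    ((∀ u : Fin (2*N-1) → ℝ, (Tmat N u).PosSemidef → 0 ≤ ∑ i, w i * u i) →
      ∀ p ∈ Kcone N, 0 ≤ fobj N y τ w p) := by
  refine ⟨⟨?_, fun hw => ⟨0, part2 N y τ hτ w hw⟩⟩, part2 N y τ hτ w⟩
  rintro ⟨B, hB⟩ u hu
  by_contra hS
  push_neg at hS
  set S : ℝ := ∑ i, w i * u i with hSdef
  set c : ℝ := ∑ i, Complex.normSq (0 - y i) with hcdef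
  have hτS : τ * S < 0 := mul_neg_of_pos_of_neg hτ hS
  set t : ℝ := max 0 ((B - c - 1) / (τ * S)) with htdef
  have ht0 : 0 ≤ t := le_max_left _ _
  have hmem : (0, (0 : Fin N → ℂ), t • u) ∈ Kcone N := by
    show (Kmat N 0 0 (t • u)).PosSemidef
    have : (Tmat N (t • u)).PosSemidef := by
      rw [tmat_smul]; exact psd_smul hu ht0
    exact kmat_zero_psd this
  have hfb := hB _ hmem
  have hsum : ∑ i, w i * (t * u i) = t * S := by
    rw [hSdef, Finset.mul_sum]
    exact Finset.sum_congr rfl fun i _ => by ring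
  have hfeq : fobj N y τ w (0, (0 : Fin N → ℂ), t • u) = c + τ * (t * S) := by
    simp only [fobj, Pi.smul_apply, Pi.zero_apply, smul_eq_mul, hsum, hcdef]
    ring
  have hle : t * (τ * S) ≤ B - c - 1 := by
    have h1 : (B - c - 1) / (τ * S) ≤ t := le_max_right _ _
    exact (div_le_iff_of_neg hτS).mp h1
  have : c + τ * (t * S) ≤ B - 1 := by nlinarith
  rw [hfeq] at hfb
  linarith
end
end

section
/- If τ < 0, or if τ > 0 and w ∉ C*, then f(v,x,u) = ‖x − y‖₂² + τ(v + wᵀu) is unbounded below on K: there exists μ ∈ K with x-component zero such that f(αμ) → −∞ as α → ∞. -/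
open Complex Matrix ComplexOrder

noncomputable section

lemma blkPSD {m n : Type*} [Fintype m] [Fintype n]
    {A : Matrix m m ℂ} {D : Matrix n n ℂ} (hA : A.PosSemidef) (hD : D.PosSemidef) :
    (Matrix.fromBlocks A 0 0 D).PosSemidef := by
  refine Matrix.PosSemidef.of_dotProduct_mulVec_nonneg (Matrix.IsHermitian.fromBlocks hA.1 (by simp) hD.1) fun x => ?_
  have := hA.dotProduct_mulVec_nonneg (x ∘ Sum.inl)
  have := hD.dotProduct_mulVec_nonneg (x ∘ Sum.inr)
  simp only [Matrix.fromBlocks_mulVec, Matrix.zero_mulVec, dotProduct,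
    Fintype.sum_sum_type] at *
  simp_all
  positivity

lemma Tmat_zero (N : ℕ) : Tmat N 0 = 0 := by
  funext n m
  simp [Tmat]

lemma lin_tendsto (C c : ℝ) (hc : c < 0) :
    Filter.Tendsto (fun α : ℝ => C + c * α) Filter.atTop Filter.atBot := by
  apply Filter.tendsto_atBot_add_const_left
  exact Filter.Tendsto.const_mul_atTop_of_neg hc Filter.tendsto_id

/-- if τ < 0, or τ > 0 and w ∉ C*, then f is unbounded below on K along a ray
with vanishing x-component. -/
theorem stmt11 (N : ℕ) (hN : 1 ≤ N) (y : Fin N → ℂ) (τ : ℝ) (w : Fin (2*N-1) → ℝ)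
    (h : τ < 0 ∨ (0 < τ ∧
      ¬ (∀ u : Fin (2*N-1) → ℝ, (Tmat N u).PosSemidef → 0 ≤ ∑ i, w i * u i))) :
    ∃ p ∈ Kcone N, p.2.1 = 0 ∧
      Filter.Tendsto (fun α : ℝ => fobj N y τ w (α • p)) Filter.atTop Filter.atBot := by
  rcases h with hτ | ⟨hτ, hw⟩
  · refine ⟨(1, 0, 0), ?_, rfl, ?_⟩
    · show (Kmat N 1 0 0).PosSemidef
      have : Kmat N 1 0 0 = Matrix.fromBlocks (0 : Matrix (Fin N) (Fin N) ℂ) 0 0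
          (1 : Matrix Unit Unit ℂ) := by
        funext i j
        cases i <;> cases j <;> simp [Kmat, Tmat_zero, Matrix.fromBlocks, Matrix.one_apply]
      rw [this]
      exact blkPSD Matrix.PosSemidef.zero Matrix.PosSemidef.one
    · have : (fun α : ℝ => fobj N y τ w (α • ((1 : ℝ), (0 : Fin N → ℂ), (0 : Fin (2*N-1) → ℝ))))
          = fun α : ℝ => (∑ i, Complex.normSq (- y i)) + τ * α := by
        funext α
        simp [fobj]
      rw [this]
      exact lin_tendsto _ τ hτ
  · push_neg at hw
    obtain ⟨u, hu, hs⟩ := hw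
    refine ⟨(0, 0, u), ?_, rfl, ?_⟩
    · show (Kmat N 0 0 u).PosSemidef
      have : Kmat N 0 0 u = Matrix.fromBlocks (Tmat N u) 0 0 (0 : Matrix Unit Unit ℂ) := by
        funext i j
        cases i <;> cases j <;> simp [Kmat, Matrix.fromBlocks]
      rw [this]
      exact blkPSD hu Matrix.PosSemidef.zero
    · have : (fun α : ℝ => fobj N y τ w (α • ((0 : ℝ), (0 : Fin N → ℂ), u)))
          = fun α : ℝ => (∑ i, Complex.normSq (- y i)) + (τ * ∑ i, w i * u i) * α := by
        funext α
        simp [fobj, Finset.mul_sum]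
        rw [Finset.sum_mul]
        apply Finset.sum_congr rfl
        intros; ring
      rw [this]
      exact lin_tendsto _ _ (mul_neg_of_pos_of_neg hτ hs)
end
end

section
/- (Dual cone characterization, ρ > 0 case, one direction) Suppose λ = (ρ, s, z) with ρ > 0 and z − (1/(4ρ)) T*(s sᴴ) ∈ C*. Then for every (v, x, u) ∈ K one has ρv + Re(sᴴx) + zᵀu ≥ 0; i.e., λ ∈ K*. -/
open Complex Matrix ComplexOrder Finset

noncomputable section

/-- Sum over the n-th upper diagonal of B. -/
def diagSum (N : ℕ) (B : Matrix (Fin N) (Fin N) ℂ) (n : ℕ) : ℂ :=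
  ∑ m : Fin N, ∑ l : Fin N, if (l : ℕ) = (m : ℕ) + n then B m l else 0

/-- The adjoint `T*` of the linear map `T`:
`T*(B) = (2β₀, 2Re β₁, …, 2Re β_{N-1}, 2Im β₁, …, 2Im β_{N-1})`. -/
def Tstar (N : ℕ) (B : Matrix (Fin N) (Fin N) ℂ) : Fin (2*N-1) → ℝ := fun k =>
  if (k : ℕ) = 0 then 2 * (diagSum N B 0).re
  else if (k : ℕ) < N then 2 * (diagSum N B (k : ℕ)).re
  else 2 * (diagSum N B ((k : ℕ) - N + 1)).im

section Aux

lemma double_sum_split (N : ℕ) (F : ℕ → ℕ → ℝ) :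
    ∑ n ∈ range N, ∑ m ∈ range N, F n m
      = (∑ n ∈ range N, F n n)
        + ∑ n ∈ range N, ∑ m ∈ range N, (if n < m then F n m + F m n else 0) := by
  have h1 : ∀ n m : ℕ, F n m = (if n = m then F n m else 0) + (if n < m then F n m else 0)
      + (if m < n then F n m else 0) := by
    intro n m
    rcases lt_trichotomy n m with h | h | h
    · simp [h, h.ne, not_lt_of_gt h]
    · simp [h, lt_irrefl]
    · simp [h, h.ne', not_lt_of_gt h]
  calc ∑ n ∈ range N, ∑ m ∈ range N, F n m
      = ∑ n ∈ range N, ∑ m ∈ range N, ((if n = m then F n m else 0)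
          + ((if n < m then F n m else 0) + (if m < n then F n m else 0))) := by
        refine Finset.sum_congr rfl fun n _ => Finset.sum_congr rfl fun m _ => ?_
        conv_lhs => rw [h1 n m]
        ring
    _ = (∑ n ∈ range N, ∑ m ∈ range N, if n = m then F n m else 0)
        + ((∑ n ∈ range N, ∑ m ∈ range N, if n < m then F n m else 0)
          + (∑ n ∈ range N, ∑ m ∈ range N, if m < n then F n m else 0)) := by
        simp [Finset.sum_add_distrib]
    _ = (∑ n ∈ range N, F n n)
        + ∑ n ∈ range N, ∑ m ∈ range N, (if n < m then F n m + F m n else 0) := by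
        congr 1
        · refine Finset.sum_congr rfl fun n hn => ?_
          have : ∑ m ∈ range N, (if n = m then F n m else 0)
              = ∑ m ∈ range N, (if m = n then F n m else 0) := by
            refine Finset.sum_congr rfl fun m _ => ?_
            rcases eq_or_ne n m with h | h
            · simp [h]
            · simp [h, h.symm]
          rw [this, Finset.sum_ite_eq' (range N) n (fun m => F n m), if_pos hn]
        · have hswap : (∑ n ∈ range N, ∑ m ∈ range N, if m < n then F n m else 0)
              = ∑ n ∈ range N, ∑ m ∈ range N, if n < m then F m n else 0 := by
            rw [Finset.sum_comm]
          rw [hswap, ← Finset.sum_add_distrib]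
          refine Finset.sum_congr rfl fun n _ => ?_
          rw [← Finset.sum_add_distrib]
          refine Finset.sum_congr rfl fun m _ => ?_
          by_cases h : n < m <;> simp [h]

lemma inner_reindex (N n : ℕ) (H : ℕ → ℝ) :
    ∑ m ∈ range N, (if n < m then H m else 0)
      = ∑ d ∈ range N, (if n + d < N ∧ 1 ≤ d then H (n + d) else 0) := by
  have e1 : ∑ m ∈ range N, (if n < m then H m else 0)
      = ∑ m ∈ range N, (if n < m ∧ m < N then H m else 0) := by
    refine Finset.sum_congr rfl fun m hm => ?_
    have := Finset.mem_range.mp hm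
    by_cases h : n < m <;> simp [h, this]
  rw [e1]
  have e2 : ∑ m ∈ range N, (if n < m ∧ m < N then H m else 0)
      = ∑ m ∈ range (n + N), (if n < m ∧ m < N then H m else 0) := by
    refine Finset.sum_subset (Finset.range_subset_range.mpr (Nat.le_add_left N n)) ?_
    intro m hm hm'
    have : ¬ m < N := fun h => hm' (Finset.mem_range.mpr h)
    simp [this]
  rw [e2, Finset.sum_range_add]
  have e3 : ∑ m ∈ range n, (if n < m ∧ m < N then H m else 0) = 0 := by
    refine Finset.sum_eq_zero fun m hm => ?_
    have := Finset.mem_range.mp hm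
    have : ¬ n < m := by omega
    simp [this]
  rw [e3, zero_add]
  refine Finset.sum_congr rfl fun d _ => ?_
  congr 1
  simp only [eq_iff_iff]
  omega

lemma range_shift {M : Type*} [AddCommMonoid M] (N : ℕ) (hN : 1 ≤ N) (A : ℕ → M) :
    ∑ d ∈ range N, A d = A 0 + ∑ k ∈ range (N-1), A (k+1) := by
  obtain ⟨M', rfl⟩ : ∃ M', N = M' + 1 := ⟨N-1, by omega⟩
  rw [Finset.sum_range_succ']
  simp [add_comm]

end Aux

section Key

variable (N : ℕ) (s : Fin N → ℂ) (u : Fin (2*N-1) → ℝ)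

/-- zero-extension of `u`. -/
private def u' (N : ℕ) (u : Fin (2*N-1) → ℝ) : ℕ → ℝ :=
  fun k => if h : k < 2*N-1 then u ⟨k, h⟩ else 0

/-- zero-extension of `s`. -/
private def s' (N : ℕ) (s : Fin N → ℂ) : ℕ → ℂ :=
  fun n => if h : n < N then s ⟨n, h⟩ else 0

/-- first-row entries. -/
private def rfun (N : ℕ) (u : Fin (2*N-1) → ℝ) : ℕ → ℂ := fun k =>
  if k = 0 then ((2 * u' N u 0 : ℝ) : ℂ)
  else ((u' N u k : ℝ) : ℂ) + Complex.I * ((u' N u (N-1+k) : ℝ) : ℂ)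

/-- diagonal sums through the zero-extension. -/
private def βfun (N : ℕ) (s : Fin N → ℂ) : ℕ → ℂ := fun d =>
  ∑ m ∈ range N, s' N s m * (starRingEnd ℂ) (s' N s (m + d))

lemma s'_eq (m : Fin N) : s' N s (m : ℕ) = s m := by
  simp [s', m.isLt]

lemma s'_zero {m : ℕ} (h : ¬ m < N) : s' N s m = 0 := by
  simp [s', h]

lemma diagSum_eq (d : ℕ) :
    diagSum N (Matrix.vecMulVec s (star s)) d = βfun N s d := by
  unfold diagSum βfun
  rw [← Fin.sum_univ_eq_sum_range
    (fun m => s' N s m * (starRingEnd ℂ) (s' N s (m + d))) N]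
  refine Finset.sum_congr rfl fun m _ => ?_
  calc ∑ l : Fin N, (if (l : ℕ) = (m : ℕ) + d then Matrix.vecMulVec s (star s) m l else 0)
      = ∑ l ∈ range N, (if l = (m : ℕ) + d
          then s' N s (m : ℕ) * (starRingEnd ℂ) (s' N s l) else 0) := by
        rw [← Fin.sum_univ_eq_sum_range
          (fun l => if l = (m : ℕ) + d then s' N s (m : ℕ) * (starRingEnd ℂ) (s' N s l) else 0) N]
        refine Finset.sum_congr rfl fun l _ => ?_
        by_cases h : (l : ℕ) = (m : ℕ) + d
        · rw [if_pos h, if_pos h]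
          rw [s'_eq, s'_eq]
          rfl
        · rw [if_neg h, if_neg h]
    _ = if (m : ℕ) + d ∈ range N
          then s' N s (m : ℕ) * (starRingEnd ℂ) (s' N s ((m : ℕ) + d)) else 0 :=
        Finset.sum_ite_eq' (range N) ((m : ℕ) + d) _
    _ = s' N s (m : ℕ) * (starRingEnd ℂ) (s' N s ((m : ℕ) + d)) := by
        by_cases h : (m : ℕ) + d < N
        · rw [if_pos (Finset.mem_range.mpr h)]
        · rw [if_neg (fun hh => h (Finset.mem_range.mp hh)), s'_zero N s h]
          simp

lemma key (hN : 1 ≤ N) :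
    (star s ⬝ᵥ (Tmat N u).mulVec s).re
      = ∑ i, Tstar N (Matrix.vecMulVec s (star s)) i * u i := by
  set S : ℕ → ℂ := s' N s with hS
  set U : ℕ → ℝ := u' N u with hU
  set r : ℕ → ℂ := rfun N u with hr
  set β : ℕ → ℂ := βfun N s with hβ
  set F : ℕ → ℕ → ℝ := fun n m =>
    ((starRingEnd ℂ) (S n) * ((if n ≤ m then r (m - n)
      else (starRingEnd ℂ) (r (n - m))) * S m)).re with hF
  -- Step A : LHS as a double range sum
  have hfin : ∀ n : Fin N, ((Tmat N u).mulVec s) n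
      = ∑ m ∈ range N, ((if (n:ℕ) ≤ m then r (m - (n:ℕ))
          else (starRingEnd ℂ) (r ((n:ℕ) - m))) * S m) := by
    intro n
    rw [show ((Tmat N u).mulVec s) n = ∑ m : Fin N, Tmat N u n m * s m from rfl]
    rw [← Fin.sum_univ_eq_sum_range
      (fun m => (if (n:ℕ) ≤ m then r (m - (n:ℕ))
        else (starRingEnd ℂ) (r ((n:ℕ) - m))) * S m) N]
    refine Finset.sum_congr rfl fun m _ => ?_
    have h1 : Tmat N u n m = if (n:ℕ) ≤ (m:ℕ) then r ((m:ℕ)-(n:ℕ))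
        else (starRingEnd ℂ) (r ((n:ℕ)-(m:ℕ))) := rfl
    rw [h1, hS, s'_eq]
  have hA' : star s ⬝ᵥ (Tmat N u).mulVec s
      = ∑ n ∈ range N, ∑ m ∈ range N, ((starRingEnd ℂ) (S n) * ((if n ≤ m then r (m - n)
          else (starRingEnd ℂ) (r (n - m))) * S m)) := by
    rw [show star s ⬝ᵥ (Tmat N u).mulVec s
        = ∑ n : Fin N, (star s) n * ((Tmat N u).mulVec s) n from rfl]
    rw [← Fin.sum_univ_eq_sum_range
      (fun n => ∑ m ∈ range N, ((starRingEnd ℂ) (S n) * ((if n ≤ m then r (m - n)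
        else (starRingEnd ℂ) (r (n - m))) * S m))) N]
    refine Finset.sum_congr rfl fun n _ => ?_
    rw [hfin n, Finset.mul_sum]
    refine Finset.sum_congr rfl fun m _ => ?_
    have h2 : (star s) n = (starRingEnd ℂ) (S (n:ℕ)) := by
      rw [hS, s'_eq]
      rfl
    rw [h2]
  have hA : (star s ⬝ᵥ (Tmat N u).mulVec s).re
      = ∑ n ∈ range N, ∑ m ∈ range N, F n m := by
    rw [hA', Complex.re_sum]
    exact Finset.sum_congr rfl fun n _ => by rw [Complex.re_sum]
  rw [hA, double_sum_split]
  -- Diagonal part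
  have hdiag : ∑ n ∈ range N, F n n = 2 * (β 0).re * U 0 := by
    have h1 : ∀ n, F n n = 2 * U 0 * (S n * (starRingEnd ℂ) (S n)).re := by
      intro n
      have h2 : (starRingEnd ℂ) (S n) * ((if n ≤ n then r (n - n)
            else (starRingEnd ℂ) (r (n - n))) * S n)
          = ((2 * U 0 : ℝ) : ℂ) * (S n * (starRingEnd ℂ) (S n)) := by
        rw [if_pos (le_refl n), Nat.sub_self]
        have h3 : r 0 = ((2 * U 0 : ℝ) : ℂ) := rfl
        rw [h3]; ring
      rw [hF]
      simp only [h2, Complex.re_ofReal_mul]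
    have h3 : (β 0).re = ∑ n ∈ range N, (S n * (starRingEnd ℂ) (S n)).re := by
      rw [hβ]; unfold βfun
      rw [Complex.re_sum, ← hS]
      exact Finset.sum_congr rfl fun n _ => by rw [Nat.add_zero]
    rw [h3]
    rw [show (∑ n ∈ range N, F n n)
        = ∑ n ∈ range N, 2 * U 0 * (S n * (starRingEnd ℂ) (S n)).re from
      Finset.sum_congr rfl fun n _ => h1 n]
    rw [Finset.mul_sum, Finset.sum_mul]
    exact Finset.sum_congr rfl fun n _ => by ring
  -- Off-diagonal part
  have hpair : ∀ n m : ℕ, n < m →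
      F n m + F m n = 2 * (((starRingEnd ℂ) (S n) * S m) * r (m - n)).re := by
    intro n m h
    have h1 : F n m = (((starRingEnd ℂ) (S n) * S m) * r (m - n)).re := by
      rw [hF]
      simp only [if_pos h.le]
      rw [show (starRingEnd ℂ) (S n) * (r (m - n) * S m)
          = ((starRingEnd ℂ) (S n) * S m) * r (m - n) from by ring]
    have h2 : F m n = (((starRingEnd ℂ) (S n) * S m) * r (m - n)).re := by
      rw [hF]
      simp only [if_neg (not_le_of_gt h)]
      have h3 : (starRingEnd ℂ) (S m) * ((starRingEnd ℂ) (r (m - n)) * S n)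
          = (starRingEnd ℂ) (((starRingEnd ℂ) (S n) * S m) * r (m - n)) := by
        simp only [RingHom.map_mul, Complex.conj_conj]
        ring
      rw [h3, Complex.conj_re]
    rw [h1, h2]; ring
  have hoff : ∑ n ∈ range N, ∑ m ∈ range N, (if n < m then F n m + F m n else 0)
      = ∑ k ∈ range (N-1), ∑ n ∈ range N,
          (if n + (k+1) < N
            then 2 * (U (k+1) * ((starRingEnd ℂ) (S n) * S (n + (k+1))).re
              - U (N-1+(k+1)) * ((starRingEnd ℂ) (S n) * S (n + (k+1))).im)
            else 0) := by
    have e1 : ∀ n ∈ range N, ∑ m ∈ range N, (if n < m then F n m + F m n else 0)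
        = ∑ d ∈ range N, (if n + d < N ∧ 1 ≤ d
            then 2 * (((starRingEnd ℂ) (S n) * S (n + d)) * r ((n + d) - n)).re else 0) := by
      intro n _
      rw [show (∑ m ∈ range N, (if n < m then F n m + F m n else 0))
          = ∑ m ∈ range N, (if n < m
              then 2 * (((starRingEnd ℂ) (S n) * S m) * r (m - n)).re else 0) from
        Finset.sum_congr rfl fun m _ => by
          by_cases h : n < m
          · rw [if_pos h, if_pos h, hpair n m h]
          · rw [if_neg h, if_neg h]]
      exact inner_reindex N n _
    rw [Finset.sum_congr rfl e1, Finset.sum_comm]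
    rw [range_shift N hN]
    have e0 : ∑ n ∈ range N, (if n + 0 < N ∧ 1 ≤ 0
        then 2 * (((starRingEnd ℂ) (S n) * S (n + 0)) * r ((n + 0) - n)).re else 0) = 0 := by
      refine Finset.sum_eq_zero fun n _ => ?_
      simp
    rw [e0, zero_add]
    refine Finset.sum_congr rfl fun k hk => ?_
    refine Finset.sum_congr rfl fun n _ => ?_
    have hcond : (n + (k+1) < N ∧ 1 ≤ k+1) ↔ (n + (k+1) < N) := by
      constructor
      · exact fun h => h.1
      · exact fun h => ⟨h, Nat.succ_le_succ (Nat.zero_le k)⟩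
    by_cases h : n + (k+1) < N
    · rw [if_pos (hcond.mpr h), if_pos h]
      have hsub : (n + (k+1)) - n = k + 1 := by omega
      rw [hsub]
      have hrk : r (k+1) = ((U (k+1) : ℝ) : ℂ) + Complex.I * ((U (N-1+(k+1)) : ℝ) : ℂ) := by
        rw [hr]; unfold rfun
        rw [if_neg (Nat.succ_ne_zero k)]
      rw [hrk]
      have hz : ∀ (z : ℂ) (a b : ℝ),
          (z * (↑a + Complex.I * ↑b)).re = a * z.re - b * z.im := by
        intro z a b
        simp [Complex.mul_re, Complex.add_re, Complex.add_im, Complex.mul_im]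
        ring
      rw [hz]
    · rw [if_neg (fun hh => h (hcond.mp hh)), if_neg h]
  rw [hdiag, hoff]
  -- RHS : Tstar sum as a range sum and split
  have hRHS : ∑ i, Tstar N (Matrix.vecMulVec s (star s)) i * u i
      = 2 * (β 0).re * U 0
        + ∑ k ∈ range (N-1), (2 * (β (k+1)).re * U (k+1) + 2 * (β (k+1)).im * U (N+k)) := by
    have e1 : ∑ i, Tstar N (Matrix.vecMulVec s (star s)) i * u i
        = ∑ k ∈ range (2*N-1), ((if k = 0 then 2 * (β 0).re
            else if k < N then 2 * (β k).re else 2 * (β (k - N + 1)).im) * U k) := by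
      rw [← Fin.sum_univ_eq_sum_range (fun k => (if k = 0 then 2 * (β 0).re
        else if k < N then 2 * (β k).re else 2 * (β (k - N + 1)).im) * U k) (2*N-1)]
      refine Finset.sum_congr rfl fun i _ => ?_
      have hui : U (i : ℕ) = u i := by
        rw [hU]; unfold u'
        rw [dif_pos i.isLt]
      rw [hui]
      congr 1
      unfold Tstar
      rw [diagSum_eq, diagSum_eq, diagSum_eq, ← hβ]
    rw [e1]
    rw [show range (2*N-1) = range (N + (N-1)) from by congr 1; omega]
    rw [Finset.sum_range_add]
    have hchunk1 : ∑ k ∈ range N, ((if k = 0 then 2 * (β 0).re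
          else if k < N then 2 * (β k).re else 2 * (β (k - N + 1)).im) * U k)
        = 2 * (β 0).re * U 0 + ∑ k ∈ range (N-1), 2 * (β (k+1)).re * U (k+1) := by
      rw [range_shift N hN]
      congr 1
      refine Finset.sum_congr rfl fun k hk => ?_
      have hk1 : k + 1 < N := by
        have := Finset.mem_range.mp hk; omega
      rw [if_neg (Nat.succ_ne_zero k), if_pos hk1]
    have hchunk2 : ∑ k ∈ range (N-1), ((if N + k = 0 then 2 * (β 0).re
          else if N + k < N then 2 * (β (N+k)).re else 2 * (β ((N+k) - N + 1)).im) * U (N+k))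
        = ∑ k ∈ range (N-1), 2 * (β (k+1)).im * U (N+k) := by
      refine Finset.sum_congr rfl fun k hk => ?_
      have h1 : ¬ (N + k = 0) := by omega
      have h2 : ¬ (N + k < N) := by omega
      rw [if_neg h1, if_neg h2]
      have h3 : N + k - N + 1 = k + 1 := by omega
      rw [h3]
    rw [hchunk1, hchunk2, add_assoc, ← Finset.sum_add_distrib]
  rw [hRHS]
  congr 1
  -- match the off-diagonal sums
  refine Finset.sum_congr rfl fun k hk => ?_
  have hNk : N - 1 + (k+1) = N + k := by omega
  rw [hNk]
  set cn : ℕ → ℂ := fun n => (starRingEnd ℂ) (S n) * S (n + (k+1)) with hcn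
  have hβre : (β (k+1)).re = ∑ n ∈ range N, (if n + (k+1) < N then (cn n).re else 0) := by
    rw [hβ]; unfold βfun
    rw [Complex.re_sum, ← hS]
    refine Finset.sum_congr rfl fun n _ => ?_
    by_cases h : n + (k+1) < N
    · rw [if_pos h]
      have h4 : S n * (starRingEnd ℂ) (S (n + (k+1))) = (starRingEnd ℂ) (cn n) := by
        rw [hcn]
        simp only [RingHom.map_mul, Complex.conj_conj]
      rw [h4, Complex.conj_re]
    · rw [if_neg h]
      have h5 : S (n + (k+1)) = 0 := by rw [hS]; exact s'_zero N s h
      rw [h5]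
      simp
  have hβim : (β (k+1)).im = ∑ n ∈ range N, (if n + (k+1) < N then -(cn n).im else 0) := by
    rw [hβ]; unfold βfun
    rw [Complex.im_sum, ← hS]
    refine Finset.sum_congr rfl fun n _ => ?_
    by_cases h : n + (k+1) < N
    · rw [if_pos h]
      have h4 : S n * (starRingEnd ℂ) (S (n + (k+1))) = (starRingEnd ℂ) (cn n) := by
        rw [hcn]
        simp only [RingHom.map_mul, Complex.conj_conj]
      rw [h4, Complex.conj_im]
    · rw [if_neg h]
      have h5 : S (n + (k+1)) = 0 := by rw [hS]; exact s'_zero N s h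
      rw [h5]
      simp
  rw [hβre, hβim, Finset.mul_sum, Finset.mul_sum, Finset.sum_mul, Finset.sum_mul,
    ← Finset.sum_add_distrib]
  refine Finset.sum_congr rfl fun n _ => ?_
  by_cases h : n + (k+1) < N
  · rw [if_pos h, if_pos h, if_pos h]; ring
  · rw [if_neg h, if_neg h, if_neg h]; ring

end Key

/-- if ρ > 0 and z - (1/(4ρ)) T*(s sᴴ) ∈ C*, then (ρ, s, z) ∈ K*. -/
theorem stmt12 (N : ℕ) (hN : 1 ≤ N) (ρ : ℝ) (s : Fin N → ℂ) (z : Fin (2*N-1) → ℝ)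
    (hρ : 0 < ρ)
    (hc : ∀ u : Fin (2*N-1) → ℝ, (Tmat N u).PosSemidef →
      0 ≤ ∑ i, (z i - (1/(4*ρ)) * Tstar N (Matrix.vecMulVec s (star s)) i) * u i) :
    ∀ (v : ℝ) (x : Fin N → ℂ) (u : Fin (2*N-1) → ℝ), (Kmat N v x u).PosSemidef →
      0 ≤ ρ * v + (star s ⬝ᵥ x).re + ∑ i, z i * u i := by
  intro v x u hK
  -- T(u) is PSD
  have hT : (Tmat N u).PosSemidef := by
    have h := hK.submatrix Sum.inl
    have h2 : (Kmat N v x u).submatrix Sum.inl Sum.inl = Tmat N u := rfl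
    rwa [h2] at h
  -- quadratic form at w = (s/(2ρ), 1)
  set c : ℂ := ((1/(2*ρ) : ℝ) : ℂ) with hc_def
  set w : Fin N ⊕ Unit → ℂ := Sum.elim (c • s) (fun _ => 1) with hw
  have hquad : 0 ≤ star w ⬝ᵥ (Kmat N v x u) *ᵥ w := hK.dotProduct_mulVec_nonneg w
  have hexp : star w ⬝ᵥ (Kmat N v x u) *ᵥ w
      = c * c * (star s ⬝ᵥ (Tmat N u).mulVec s) + c * (star s ⬝ᵥ x)
        + c * (starRingEnd ℂ) (star s ⬝ᵥ x) + (v : ℂ) := by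
    rw [hw, Kmat]; erw [fromBlocks_mulVec]; rw [dotProduct_block]
    simp only [Sum.elim_comp_inl, Sum.elim_comp_inr]
    have e1 : star ((c • s) ⊕ᵥ fun _ : Unit => (1:ℂ)) ∘ (Sum.inl : Fin N → Fin N ⊕ Unit) = (starRingEnd ℂ) c • star s := by
      funext i; simp [star_smul]
    have e2 : star ((c • s) ⊕ᵥ fun _ : Unit => (1:ℂ)) ∘ (Sum.inr : Unit → Fin N ⊕ Unit) = fun _ => (1:ℂ) := by
      funext i; simp
    have e3 : ((fun i (_ : Unit) => x i) *ᵥ fun _ : Unit => (1:ℂ)) = x := by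
      funext i; simp [mulVec, dotProduct]
    have e4 : ((fun (_ : Unit) j => star (x j)) *ᵥ (c • s)) = fun _ : Unit => c * (star x ⬝ᵥ s) := by
      funext i
      erw [mulVec_smul]
      simp only [Pi.smul_apply, smul_eq_mul]
      congr 1
    have e5 : ((fun (_ : Unit) (_ : Unit) => (v:ℂ)) *ᵥ fun _ : Unit => (1:ℂ)) = fun _ : Unit => (v:ℂ) := by
      funext i; simp [mulVec, dotProduct]
    rw [e1, e2, e3, e4, e5, Matrix.mulVec_smul]
    rw [dotProduct_add, dotProduct_add, smul_dotProduct, smul_dotProduct,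
      dotProduct_smul]
    have e6 : (starRingEnd ℂ) c = c := by rw [hc_def, Complex.conj_ofReal]
    have e7 : star x ⬝ᵥ s = (starRingEnd ℂ) (star s ⬝ᵥ x) := star_dotProduct x s
    rw [e6]
    simp only [smul_eq_mul]
    simp [dotProduct, e7, mul_comm]
    ring
  have hR : 0 ≤ (1/(2*ρ))^2 * (star s ⬝ᵥ (Tmat N u).mulVec s).re
      + (1/ρ) * (star s ⬝ᵥ x).re + v := by
    have h0 : 0 ≤ (star w ⬝ᵥ (Kmat N v x u) *ᵥ w).re := by
      rw [Complex.le_def] at hquad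
      simpa using hquad.1
    rw [hexp] at h0
    have h1 : (c * c * (star s ⬝ᵥ (Tmat N u).mulVec s) + c * (star s ⬝ᵥ x)
        + c * (starRingEnd ℂ) (star s ⬝ᵥ x) + (v : ℂ)).re
        = (1/(2*ρ))^2 * (star s ⬝ᵥ (Tmat N u).mulVec s).re
          + (1/ρ) * (star s ⬝ᵥ x).re + v := by
      rw [hc_def]
      simp [Complex.add_re, Complex.mul_re, Complex.mul_im, Complex.ofReal_re,
        Complex.ofReal_im, Complex.conj_re, Complex.conj_im]
      ring
    linarith [h1 ▸ h0]
  have hkey := key N s u hN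
  have hz := hc u hT
  have hsum : ∑ i, (z i - (1/(4*ρ)) * Tstar N (Matrix.vecMulVec s (star s)) i) * u i
      = (∑ i, z i * u i) - (1/(4*ρ)) * (star s ⬝ᵥ (Tmat N u).mulVec s).re := by
    rw [hkey, Finset.mul_sum, ← Finset.sum_sub_distrib]
    refine Finset.sum_congr rfl fun i _ => by ring
  rw [hsum] at hz
  set R : ℝ := (star s ⬝ᵥ (Tmat N u).mulVec s).re with hRdef
  have hne : ρ ≠ 0 := ne_of_gt hρ
  have h3 : 0 ≤ (1/(4*ρ)) * R + (star s ⬝ᵥ x).re + ρ * v := by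
    have h4 := mul_nonneg hρ.le hR
    have heq : ρ * ((1/(2*ρ))^2 * R + (1/ρ) * (star s ⬝ᵥ x).re + v)
        = (1/(4*ρ)) * R + (star s ⬝ᵥ x).re + ρ * v := by
      field_simp; ring
    linarith [heq ▸ h4]
  linarith [hz, h3]
end
end

section
/- (Dual cone characterization, ρ = 0 case) λ = (0, s, z) belongs to K* if and only if s = 0 and z ∈ C*. -/
open Complex Matrix ComplexOrder

noncomputable section

lemma Tmat_half (N : ℕ) (hN : 1 ≤ N) :
    Tmat N (fun k => if (k:ℕ) = 0 then (1/2 : ℝ) else 0) = (1 : Matrix (Fin N) (Fin N) ℂ) := by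
  ext n m
  have h2 : 0 < 2*N-1 := by omega
  simp only [Tmat]
  rcases lt_trichotomy (n:ℕ) (m:ℕ) with h | h | h
  · rw [if_pos h.le, if_neg (by omega)]
    have h1 : (m:ℕ)-(n:ℕ) ≠ 0 := by omega
    have h3 : N-1+((m:ℕ)-(n:ℕ)) ≠ 0 := by omega
    have hnm : n ≠ m := by intro e; omega
    simp [h1, h3, Matrix.one_apply, hnm]
  · have hnm : n = m := Fin.ext h
    subst hnm
    simp [h2, Matrix.one_apply]
  · rw [if_neg (by omega)]
    have h1 : (n:ℕ)-(m:ℕ) ≠ 0 := by omega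
    have h3 : N-1+((n:ℕ)-(m:ℕ)) ≠ 0 := by omega
    have hnm : n ≠ m := by intro e; omega
    simp [h1, h3, Matrix.one_apply, hnm]

lemma Kmat_psd (N : ℕ) (hN : 1 ≤ N) (x : Fin N → ℂ) :
    (Kmat N (∑ i, Complex.normSq (x i)) x
      (fun k => if (k:ℕ) = 0 then (1/2 : ℝ) else 0)).PosSemidef := by
  set B : Matrix (Fin N) Unit ℂ := fun i _ => x i with hB
  set D : Matrix Unit Unit ℂ := fun _ _ => ((∑ i, Complex.normSq (x i) : ℝ) : ℂ) with hD
  have hK : Kmat N (∑ i, Complex.normSq (x i)) x (fun k => if (k:ℕ) = 0 then (1/2:ℝ) else 0)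
      = Matrix.fromBlocks (1 : Matrix (Fin N) (Fin N) ℂ) B Bᴴ D := by
    rw [Kmat, Tmat_half N hN]
    congr 1
  rw [hK]
  haveI : Invertible (1 : Matrix (Fin N) (Fin N) ℂ) := invertibleOne
  rw [Matrix.PosDef.fromBlocks₁₁ B D Matrix.PosDef.one]
  have : D - Bᴴ * (1:Matrix (Fin N) (Fin N) ℂ)⁻¹ * B = 0 := by
    ext i j
    simp only [inv_one, Matrix.mul_one, Matrix.sub_apply, Matrix.mul_apply, Matrix.conjTranspose_apply]
    simp [hD, hB, Matrix.mul_apply, Complex.ext_iff, Complex.normSq_apply, mul_comm]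
  rw [this]
  exact Matrix.PosSemidef.zero

lemma Tmat_psd_of_Kmat {N : ℕ} {v : ℝ} {x : Fin N → ℂ} {u : Fin (2*N-1) → ℝ}
    (h : (Kmat N v x u).PosSemidef) : (Tmat N u).PosSemidef := by
  exact h.submatrix (Sum.inl : Fin N → Fin N ⊕ Unit)

lemma Kmat_zero_psd {N : ℕ} {u : Fin (2*N-1) → ℝ} (h : (Tmat N u).PosSemidef) :
    (Kmat N 0 0 u).PosSemidef := by
  rw [Matrix.posSemidef_iff_dotProduct_mulVec] at h ⊢
  constructor
  · exact Matrix.IsHermitian.fromBlocks h.1 (by ext i j; simp; exact star_zero _) (by ext i j; simp; exact star_zero _)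
  · intro y
    have := h.2 (fun i => y (Sum.inl i))
    convert this using 1
    simp [dotProduct, Fintype.sum_sum_type, Matrix.mulVec, Kmat, Matrix.fromBlocks,
      dotProduct]

/-- (0, s, z) ∈ K* iff s = 0 and z ∈ C*. -/
theorem stmt13 (N : ℕ) (hN : 1 ≤ N) (s : Fin N → ℂ) (z : Fin (2*N-1) → ℝ) :
    (∀ (v : ℝ) (x : Fin N → ℂ) (u : Fin (2*N-1) → ℝ), (Kmat N v x u).PosSemidef →
        0 ≤ (0:ℝ) * v + (star s ⬝ᵥ x).re + ∑ i, z i * u i) ↔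
      (s = 0 ∧ ∀ u : Fin (2*N-1) → ℝ, (Tmat N u).PosSemidef → 0 ≤ ∑ i, z i * u i) := by
  have h01 : 0 < 2*N-1 := by omega
  constructor
  · intro h
    constructor
    · by_contra hs
      obtain ⟨i0, hi0⟩ := Function.ne_iff.mp hs
      have hS2 : 0 < ∑ i, Complex.normSq (s i) :=
        Finset.sum_pos' (fun j _ => Complex.normSq_nonneg _)
          ⟨i0, Finset.mem_univ i0, Complex.normSq_pos.mpr hi0⟩
      set S2 := ∑ i, Complex.normSq (s i) with hS2def
      set z0 := z ⟨0, h01⟩ with hz0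
      set c : ℝ := (|z0| + 1) / S2 with hc
      set x : Fin N → ℂ := fun i => -(c:ℂ) * s i with hx
      set u0 : Fin (2*N-1) → ℝ := fun k => if (k:ℕ) = 0 then (1/2:ℝ) else 0 with hu0
      have hval := h (∑ i, Complex.normSq (x i)) x u0 (Kmat_psd N hN x)
      have hdot : (star s ⬝ᵥ x) = ((-(c * S2) : ℝ) : ℂ) := by
        simp only [dotProduct, hx, Pi.star_apply, hS2def]
        push_cast
        rw [Finset.sum_congr rfl (fun i _ => by
          rw [show star (s i) * (-(c:ℂ) * s i) = -(c:ℂ) * (star (s i) * s i) by ring,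
            Complex.star_def, Complex.conj_mul'])]
        rw [← Finset.mul_sum]
        push_cast
        simp only [← Complex.sq_norm, Complex.normSq_eq_norm_sq]
        push_cast
        ring
      have hsum : ∑ i, z i * u0 i = z0 * (1/2) := by
        rw [Finset.sum_eq_single (⟨0, h01⟩ : Fin (2*N-1))]
        · simp [hu0, hz0]
        · intro b _ hb
          have : (b:ℕ) ≠ 0 := fun e => hb (Fin.ext e)
          simp [hu0, this]
        · simp
      rw [hdot, hsum] at hval
      simp only [Complex.ofReal_re, zero_mul, zero_add] at hval
      have hcS2 : c * S2 = |z0| + 1 := by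
        rw [hc, div_mul_cancel₀ _ hS2.ne']
      rw [hcS2] at hval
      rcases abs_cases z0 with ⟨he, _⟩ | ⟨he, _⟩ <;> rw [he] at hval <;> linarith
    · intro u hu
      have := h 0 0 u (Kmat_zero_psd hu)
      simpa using this
  · rintro ⟨hs, hz⟩ v x u hK
    subst hs
    have := hz u (Tmat_psd_of_Kmat hK)
    simpa using this
end
end
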